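/- arXiv:1605.09493 — 9 statements merged into one kernel-verified Lean document; each statement's English description precedes it below -/
import Mathlib

section
/- A joint pmf p belongs to 𝒫* if and only if r*(p) ∈ R(p). Equivalently, 𝒫* = { p : r*(p) ∈ R(p) }. -/
open Finset Real

namespace MWRC

variable {L : ℕ} {W : Fin L → Type*} [∀ i, Fintype (W i)] [∀ i, DecidableEq (W i)]

/-- `p` is a joint probability mass function on `𝒲_1 × ⋯ × 𝒲_L`. -/
def IsPMF (p : (∀ i, W i) → ℝ) : Prop :=
  (∀ x, 0 ≤ p x) ∧ ∑ x : ∀ i, W i, p x = 1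

/-- Marginal of `p` on the coordinates in `A`. -/
noncomputable def marg (p : (∀ i, W i) → ℝ) (A : Finset (Fin L))
    (y : ∀ i : {a : Fin L // a ∈ A}, W i.1) : ℝ :=
  ∑ x : ∀ i, W i, if (fun j : {a : Fin L // a ∈ A} => x j.1) = y then p x else 0

/-- Base-2 Shannon entropy `H(W_A)` of the marginal of `p` on the coordinates in `A`
(with the convention `0 · log 0 = 0`, which is automatic since `logb 2 0 = 0`). -/
noncomputable def margEnt (p : (∀ i, W i) → ℝ) (A : Finset (Fin L)) : ℝ :=
  -∑ y : ∀ i : {a : Fin L // a ∈ A}, W i.1, marg p A y * Real.logb 2 (marg p A y)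

/-- Conditional entropy `H(W_A | W_B) = H(W_{A ∪ B}) - H(W_B)`. -/
noncomputable def condEnt (p : (∀ i, W i) → ℝ) (A B : Finset (Fin L)) : ℝ :=
  margEnt p (A ∪ B) - margEnt p B

/-- Conditional mutual information
`I(W_A; W_B | W_C) = H(W_A|W_C) + H(W_B|W_C) - H(W_{A∪B}|W_C)`. -/
noncomputable def condMI (p : (∀ i, W i) → ℝ) (A B C : Finset (Fin L)) : ℝ :=
  condEnt p A C + condEnt p B C - condEnt p (A ∪ B) C

/-- The region `R(p)`. -/
def Rset (p : (∀ i, W i) → ℝ) : Set (Fin L → ℝ) :=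
  {r | (∀ ℓ, 0 ≤ r ℓ) ∧
    ∀ S : Finset (Fin L), S ⊂ Finset.univ → condEnt p S Sᶜ ≤ ∑ i ∈ S, r i}

/-- `‖h(p)‖ = Σ_ℓ H(W_{ℓᶜ} | W_ℓ)`. -/
noncomputable def hNorm (p : (∀ i, W i) → ℝ) : ℝ :=
  ∑ ℓ : Fin L, condEnt p {ℓ}ᶜ {ℓ}

/-- `r*(p)`, with `r*_ℓ = ‖h(p)‖/(L-1) - H(W_{ℓᶜ}|W_ℓ)`. -/
noncomputable def rstar (p : (∀ i, W i) → ℝ) : Fin L → ℝ :=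
  fun ℓ => hNorm p / ((L : ℝ) - 1) - condEnt p {ℓ}ᶜ {ℓ}

/-- Membership in the class `𝒫*`. -/
def Pstar (p : (∀ i, W i) → ℝ) : Prop :=
  ∃ r ∈ Rset p, ∀ ℓ : Fin L, ∑ i ∈ ({ℓ}ᶜ : Finset (Fin L)), r i = condEnt p {ℓ}ᶜ {ℓ}

/-- Conditional multiple-mutual information `I_K` (with `I_∅ = 0`). -/
noncomputable def multiInfo (p : (∀ i, W i) → ℝ) (K : Finset (Fin L)) : ℝ :=
  ∑ t ∈ Finset.Icc 1 K.card, (-1 : ℝ) ^ (t - 1) *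
    ∑ T ∈ K.powerset.filter (fun T => T.card = t), condEnt p T Kᶜ

/-- `μ̄_k`: the largest `I_S` over subsets of cardinality `k`. -/
noncomputable def muMax (p : (∀ i, W i) → ℝ) (k : ℕ) : ℝ :=
  sSup {x | ∃ S : Finset (Fin L), S.card = k ∧ multiInfo p S = x}

/-- `μ̲_k`: the smallest `I_S` over subsets of cardinality `k`. -/
noncomputable def muMin (p : (∀ i, W i) → ℝ) (k : ℕ) : ℝ :=
  sInf {x | ∃ S : Finset (Fin L), S.card = k ∧ multiInfo p S = x}

/-- `gap_k = 1 + (1/k)·(L−1)/(2L−k−3)`. -/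
noncomputable def gap (L k : ℕ) : ℝ :=
  1 + (1 / (k : ℝ)) * (((L : ℝ) - 1) / (2 * (L : ℝ) - (k : ℝ) - 3))

/-- A source is balanced if `μ̄_k ≤ gap_k · μ̲_k` for all `k ∈ [2, L-1]`. -/
def Balanced (p : (∀ i, W i) → ℝ) : Prop :=
  ∀ k ∈ Finset.Icc 2 (L - 1), muMax p k ≤ gap L k * muMin p k

/-- `J_ℓ(K)`. -/
noncomputable def J (p : (∀ i, W i) → ℝ) (ℓ : Fin L) (K : Finset (Fin L)) : ℝ :=
  if ℓ ∈ K then (((L : ℝ) - (K.card : ℝ)) / ((L : ℝ) - 1)) * multiInfo p K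
  else ((1 - (K.card : ℝ)) / ((L : ℝ) - 1)) * multiInfo p K

/-- `r†_ℓ = Σ_{K ⊂ [1,L]} J_ℓ(K)`, the sum over all strict subsets of `[1,L]`. -/
noncomputable def rdag (p : (∀ i, W i) → ℝ) : Fin L → ℝ :=
  fun ℓ => ∑ K ∈ Finset.univ.powerset.filter (fun K => K ≠ Finset.univ), J p ℓ K

end MWRC


open MWRC Finset

/-- `p ∈ 𝒫*` if and only if `r*(p) ∈ R(p)`. -/
theorem stmt1 {L : ℕ} (hL : 2 ≤ L) {W : Fin L → Type*} [∀ i, Fintype (W i)]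
    [∀ i, DecidableEq (W i)] (p : (∀ i, W i) → ℝ) (hp : IsPMF p) :
    Pstar p ↔ rstar p ∈ Rset p := by
  have hL1 : ((L : ℝ) - 1) ≠ 0 := by
    have : (2 : ℝ) ≤ (L : ℝ) := by exact_mod_cast hL
    linarith
  have compl_sum : ∀ (r : Fin L → ℝ) (ℓ : Fin L),
      ∑ i ∈ ({ℓ}ᶜ : Finset (Fin L)), r i = (∑ i, r i) - r ℓ := by
    intro r ℓ
    have h := Finset.sum_compl_add_sum ({ℓ} : Finset (Fin L)) r
    rw [Finset.sum_singleton] at h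
    linarith
  constructor
  · rintro ⟨r, hrR, hr⟩
    have key : ∀ ℓ, (∑ i, r i) - r ℓ = condEnt p {ℓ}ᶜ {ℓ} := by
      intro ℓ
      rw [← hr ℓ, compl_sum]
    have hsum : ((L : ℝ) - 1) * ∑ i, r i = hNorm p := by
      have h2 : ∑ ℓ : Fin L, ((∑ i, r i) - r ℓ) = hNorm p := by
        unfold hNorm
        exact Finset.sum_congr rfl (fun ℓ _ => key ℓ)
      rw [Finset.sum_sub_distrib, Finset.sum_const, Finset.card_univ,
        Fintype.card_fin, nsmul_eq_mul] at h2
      linarith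
    have hr' : rstar p = r := by
      funext ℓ
      unfold rstar
      rw [← key ℓ, ← hsum]
      field_simp
      ring
    rw [hr']; exact hrR
  · intro h
    refine ⟨rstar p, h, ?_⟩
    intro ℓ
    rw [compl_sum]
    have hsum : ∑ i, rstar p i
        = (L : ℝ) * (hNorm p / ((L : ℝ) - 1)) - hNorm p := by
      unfold rstar
      rw [Finset.sum_sub_distrib, Finset.sum_const, Finset.card_univ,
        Fintype.card_fin, nsmul_eq_mul]
      rfl
    rw [hsum]
    show _ - rstar p ℓ = _
    unfold rstar
    field_simp
    ring
end

section
/- For fixed finite alphabets 𝒲_1,…,𝒲_L, the set 𝒫* is a closed subset of the probability simplex of joint pmfs on 𝒲_1×⋯×𝒲_L (with the subspace topology inherited from ℝ^{𝒲_1×⋯×𝒲_L}). -/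
open Finset Real

open MWRC Finset

section Aux

variable {L : ℕ} {W : Fin L → Type*} [∀ i, Fintype (W i)] [∀ i, DecidableEq (W i)]

lemma continuous_mul_logb : Continuous fun t : ℝ => t * Real.logb 2 t := by
  have h : (fun t : ℝ => t * Real.logb 2 t) = fun t => (t * Real.log t) * (Real.log 2)⁻¹ := by
    ext t; rw [Real.logb]; ring
  rw [h]
  exact Real.continuous_mul_log.mul continuous_const

lemma continuous_marg (A : Finset (Fin L)) (y : ∀ i : {a : Fin L // a ∈ A}, W i.1) :
    Continuous fun q : (∀ i, W i) → ℝ => marg q A y := by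
  unfold marg
  refine continuous_finset_sum _ fun x _ => ?_
  by_cases h : (fun j : {a : Fin L // a ∈ A} => x j.1) = y
  · simpa [h] using continuous_apply x
  · simpa [h] using continuous_const

lemma continuous_margEnt (A : Finset (Fin L)) :
    Continuous fun q : (∀ i, W i) → ℝ => margEnt q A := by
  unfold margEnt
  exact (continuous_finset_sum _ fun y _ =>
    continuous_mul_logb.comp (continuous_marg A y)).neg

lemma continuous_condEnt (A B : Finset (Fin L)) :
    Continuous fun q : (∀ i, W i) → ℝ => condEnt q A B := by
  unfold condEnt
  exact (continuous_margEnt (A ∪ B)).sub (continuous_margEnt B)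

lemma isCompact_pmf : IsCompact {q : (∀ i, W i) → ℝ | IsPMF q} := by
  have hsub : {q : (∀ i, W i) → ℝ | IsPMF q} ⊆
      Set.pi Set.univ (fun _ : ∀ i, W i => Set.Icc (0 : ℝ) 1) := by
    rintro q ⟨h0, h1⟩ x _
    refine ⟨h0 x, ?_⟩
    calc q x ≤ ∑ z : ∀ i, W i, q z :=
      Finset.single_le_sum (fun z _ => h0 z) (Finset.mem_univ x)
    _ = 1 := h1
  have hclosed : IsClosed {q : (∀ i, W i) → ℝ | IsPMF q} := by
    have : {q : (∀ i, W i) → ℝ | IsPMF q} =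
        (⋂ x : ∀ i, W i, {q : (∀ i, W i) → ℝ | 0 ≤ q x}) ∩
        {q : (∀ i, W i) → ℝ | ∑ x : ∀ i, W i, q x = 1} := by
      ext q; simp [IsPMF, Set.mem_iInter]
    rw [this]
    exact (isClosed_iInter fun x =>
        isClosed_le continuous_const (continuous_apply x)).inter
      (isClosed_eq (continuous_finset_sum _ fun x _ => continuous_apply x) continuous_const)
  exact (isCompact_univ_pi fun _ => isCompact_Icc).of_isClosed_subset hclosed hsub

end Aux

/-- For fixed finite alphabets, `𝒫*` is a closed subset of the
probability simplex of joint pmfs (with the subspace topology inherited from the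
function space `ℝ^{𝒲_1 × ⋯ × 𝒲_L}`). -/
theorem stmt4 {L : ℕ} (hL : 2 ≤ L) {W : Fin L → Type*} [∀ i, Fintype (W i)]
    [∀ i, DecidableEq (W i)] :
    IsClosed {p : {q : (∀ i, W i) → ℝ // IsPMF q} | Pstar p.1} := by
  set S := {q : (∀ i, W i) → ℝ // IsPMF q}
  haveI : CompactSpace S := isCompact_iff_compactSpace.mp isCompact_pmf
  rcases isEmpty_or_nonempty S with hS | hS
  · have : {p : S | Pstar p.1} = ∅ := Set.eq_empty_of_isEmpty _
    rw [this]; exact isClosed_empty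
  -- continuous bound function
  set φ : S → ℝ := fun p => ∑ ℓ : Fin L, |condEnt p.1 ({ℓ}ᶜ : Finset (Fin L)) {ℓ}| with hφdef
  have hφcont : Continuous φ :=
    continuous_finset_sum _ fun ℓ _ =>
      ((continuous_condEnt _ _).comp continuous_subtype_val).abs
  obtain ⟨pm, -, hM'⟩ := isCompact_univ.exists_isMaxOn (Set.univ_nonempty)
    hφcont.continuousOn
  have hM : ∀ p : S, p ∈ Set.univ → φ p ≤ φ pm := fun p hp => hM' hp
  set M : ℝ := φ pm with hMdef
  -- condEnt bound
  have hce : ∀ (p : S) (ℓ : Fin L), condEnt p.1 ({ℓ}ᶜ : Finset (Fin L)) {ℓ} ≤ M := by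
    intro p ℓ
    calc condEnt p.1 ({ℓ}ᶜ : Finset (Fin L)) {ℓ}
        ≤ |condEnt p.1 ({ℓ}ᶜ : Finset (Fin L)) {ℓ}| := le_abs_self _
      _ ≤ φ p :=
        Finset.single_le_sum
          (f := fun j : Fin L => |condEnt p.1 ({j}ᶜ : Finset (Fin L)) {j}|)
          (fun j _ => abs_nonneg _) (Finset.mem_univ ℓ)
      _ ≤ M := hM p (Set.mem_univ p)
  -- the closed witness set
  set C : Set (S × (Fin L → ℝ)) :=
    {x | (∀ ℓ, 0 ≤ x.2 ℓ) ∧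
      (∀ T : Finset (Fin L), T ⊂ Finset.univ → condEnt x.1.1 T Tᶜ ≤ ∑ i ∈ T, x.2 i) ∧
      (∀ ℓ : Fin L, ∑ i ∈ ({ℓ}ᶜ : Finset (Fin L)), x.2 i = condEnt x.1.1 {ℓ}ᶜ {ℓ})} with hCdef
  have hCclosed : IsClosed C := by
    have h1 : IsClosed {x : S × (Fin L → ℝ) | ∀ ℓ, 0 ≤ x.2 ℓ} := by
      have : {x : S × (Fin L → ℝ) | ∀ ℓ, 0 ≤ x.2 ℓ} =
          ⋂ ℓ : Fin L, {x : S × (Fin L → ℝ) | 0 ≤ x.2 ℓ} := by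
        ext x; simp [Set.mem_iInter]
      rw [this]
      exact isClosed_iInter fun ℓ =>
        isClosed_le continuous_const ((continuous_apply ℓ).comp continuous_snd)
    have h2 : IsClosed {x : S × (Fin L → ℝ) |
        ∀ T : Finset (Fin L), T ⊂ Finset.univ → condEnt x.1.1 T Tᶜ ≤ ∑ i ∈ T, x.2 i} := by
      have : {x : S × (Fin L → ℝ) |
          ∀ T : Finset (Fin L), T ⊂ Finset.univ → condEnt x.1.1 T Tᶜ ≤ ∑ i ∈ T, x.2 i} =
          ⋂ (T : Finset (Fin L)) (_ : T ⊂ Finset.univ),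
            {x : S × (Fin L → ℝ) | condEnt x.1.1 T Tᶜ ≤ ∑ i ∈ T, x.2 i} := by
        ext x; simp [Set.mem_iInter]
      rw [this]
      refine isClosed_iInter fun T => isClosed_iInter fun _ => ?_
      exact isClosed_le
        ((continuous_condEnt T Tᶜ).comp (continuous_subtype_val.comp continuous_fst))
        (continuous_finset_sum _ fun i _ => (continuous_apply i).comp continuous_snd)
    have h3 : IsClosed {x : S × (Fin L → ℝ) |
        ∀ ℓ : Fin L, ∑ i ∈ ({ℓ}ᶜ : Finset (Fin L)), x.2 i = condEnt x.1.1 {ℓ}ᶜ {ℓ}} := by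
      have : {x : S × (Fin L → ℝ) |
          ∀ ℓ : Fin L, ∑ i ∈ ({ℓ}ᶜ : Finset (Fin L)), x.2 i = condEnt x.1.1 {ℓ}ᶜ {ℓ}} =
          ⋂ ℓ : Fin L, {x : S × (Fin L → ℝ) |
            ∑ i ∈ ({ℓ}ᶜ : Finset (Fin L)), x.2 i = condEnt x.1.1 {ℓ}ᶜ {ℓ}} := by
        ext x; simp [Set.mem_iInter]
      rw [this]
      refine isClosed_iInter fun ℓ => isClosed_eq
        (continuous_finset_sum _ fun i _ => (continuous_apply i).comp continuous_snd)
        ((continuous_condEnt _ _).comp (continuous_subtype_val.comp continuous_fst))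
    have : C = {x : S × (Fin L → ℝ) | ∀ ℓ, 0 ≤ x.2 ℓ} ∩
        ({x : S × (Fin L → ℝ) |
          ∀ T : Finset (Fin L), T ⊂ Finset.univ → condEnt x.1.1 T Tᶜ ≤ ∑ i ∈ T, x.2 i} ∩
         {x : S × (Fin L → ℝ) |
          ∀ ℓ : Fin L, ∑ i ∈ ({ℓ}ᶜ : Finset (Fin L)), x.2 i = condEnt x.1.1 {ℓ}ᶜ {ℓ}}) := by
      rfl
    rw [this]
    exact h1.inter (h2.inter h3)
  -- C is contained in a compact set
  have hCsub : C ⊆ (Set.univ : Set S) ×ˢ Set.pi Set.univ (fun _ : Fin L => Set.Icc 0 M) := by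
    rintro ⟨p, r⟩ ⟨h0, _, heq⟩ 
    refine ⟨Set.mem_univ _, fun i _ => ⟨h0 i, ?_⟩⟩
    obtain ⟨ℓ, hℓ⟩ : ∃ ℓ : Fin L, ℓ ≠ i := by
      have : 1 < Fintype.card (Fin L) := by simpa using lt_of_lt_of_le one_lt_two hL
      exact Fintype.exists_ne_of_one_lt_card this i
    have hi : i ∈ ({ℓ}ᶜ : Finset (Fin L)) := by
      simp [Finset.mem_compl, Ne.symm hℓ]
    calc r i ≤ ∑ j ∈ ({ℓ}ᶜ : Finset (Fin L)), r j :=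
        Finset.single_le_sum (fun j _ => h0 j) hi
      _ = condEnt p.1 ({ℓ}ᶜ : Finset (Fin L)) {ℓ} := heq ℓ
      _ ≤ M := hce p ℓ
  have hCcompact : IsCompact C :=
    ((isCompact_univ.prod (isCompact_univ_pi fun _ => isCompact_Icc))).of_isClosed_subset
      hCclosed hCsub
  -- the target set is the image of C under the first projection
  have himg : {p : S | Pstar p.1} = Prod.fst '' C := by
    ext p
    constructor
    · rintro ⟨r, ⟨h0, hineq⟩, heq⟩
      exact ⟨(p, r), ⟨h0, hineq, heq⟩, rfl⟩
    · rintro ⟨⟨q, r⟩, ⟨h0, hineq, heq⟩, rfl⟩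
      exact ⟨r, ⟨h0, hineq⟩, heq⟩
  rw [himg]
  exact (hCcompact.image continuous_fst).isClosed
end

section
/- For every integer L ≥ 3 there exist finite alphabets 𝒲_1,…,𝒲_L and joint pmfs p, p′ on 𝒲_1×⋯×𝒲_L with p ∈ 𝒫* and p′ ∈ 𝒫* such that the convex combination (p + p′)/2 does not belong to 𝒫*; that is, 𝒫* is not convex for any L ≥ 3. -/
open Finset Real

namespace MWRC

variable {L : ℕ} {W : Fin L → Type*} [∀ i, Fintype (W i)] [∀ i, DecidableEq (W i)]

lemma marg_ind (c : ∀ i, W i) (w : ℝ) (A : Finset (Fin L))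
    (y : ∀ i : {a : Fin L // a ∈ A}, W i.1) :
    marg (fun x => if x = c then w else 0) A y
      = if (fun j : {a : Fin L // a ∈ A} => c j.1) = y then w else 0 := by
  unfold marg
  rw [Finset.sum_congr rfl (fun x _ => show
      (if (fun j : {a : Fin L // a ∈ A} => x j.1) = y then (if x = c then w else 0) else 0)
        = if x = c then (if (fun j : {a : Fin L // a ∈ A} => c j.1) = y then w else 0) else 0 by
    by_cases h : x = c
    · subst h; simp
    · simp [h])]
  simp [Finset.sum_ite_eq']

lemma margEnt_ind (c : ∀ i, W i) (A : Finset (Fin L)) :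
    margEnt (fun x => if x = c then (1:ℝ) else 0) A = 0 := by
  unfold margEnt
  rw [Finset.sum_eq_zero, neg_zero]
  intro y _
  rw [marg_ind]
  split_ifs <;> simp

lemma marg_add (f g : (∀ i, W i) → ℝ) (A : Finset (Fin L))
    (y : ∀ i : {a : Fin L // a ∈ A}, W i.1) :
    marg (fun x => f x + g x) A y = marg f A y + marg g A y := by
  unfold marg
  rw [← Finset.sum_add_distrib]
  exact Finset.sum_congr rfl fun x _ => by split_ifs <;> simp

lemma margEnt_two_eq (c d : ∀ i, W i) (A : Finset (Fin L))
    (h : (fun j : {a : Fin L // a ∈ A} => c j.1) = (fun j : {a : Fin L // a ∈ A} => d j.1)) :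
    margEnt (fun x => (if x = c then (1:ℝ)/2 else 0) + (if x = d then 1/2 else 0)) A = 0 := by
  unfold margEnt
  rw [Finset.sum_eq_zero, neg_zero]
  intro y _
  rw [marg_add, marg_ind, marg_ind, ← h]
  split_ifs <;> norm_num

lemma margEnt_two_ne (c d : ∀ i, W i) (A : Finset (Fin L))
    (h : (fun j : {a : Fin L // a ∈ A} => c j.1) ≠ (fun j : {a : Fin L // a ∈ A} => d j.1)) :
    margEnt (fun x => (if x = c then (1:ℝ)/2 else 0) + (if x = d then 1/2 else 0)) A = 1 := by
  have hlogb : Real.logb 2 (1/2 : ℝ) = -1 := by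
    rw [one_div, Real.logb_inv, Real.logb_self_eq_one] <;> norm_num
  unfold margEnt
  rw [Finset.sum_congr rfl (fun y _ => show
      marg (fun x => (if x = c then (1:ℝ)/2 else 0) + (if x = d then 1/2 else 0)) A y *
        Real.logb 2 (marg (fun x => (if x = c then (1:ℝ)/2 else 0) + (if x = d then 1/2 else 0)) A y)
      = (if (fun j : {a : Fin L // a ∈ A} => c j.1) = y then (1:ℝ)/2 * Real.logb 2 (1/2) else 0)
        + (if (fun j : {a : Fin L // a ∈ A} => d j.1) = y then (1:ℝ)/2 * Real.logb 2 (1/2) else 0) by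
    rw [marg_add, marg_ind, marg_ind]
    by_cases h1 : (fun j : {a : Fin L // a ∈ A} => c j.1) = y
    · have h2 : ¬ (fun j : {a : Fin L // a ∈ A} => d j.1) = y := fun h2 => h (h1.trans h2.symm)
      simp [h1, h2]
    · by_cases h2 : (fun j : {a : Fin L // a ∈ A} => d j.1) = y
      · simp [h1, h2]
      · simp [h1, h2])]
  rw [Finset.sum_add_distrib, Finset.sum_ite_eq, Finset.sum_ite_eq]
  simp [hlogb]
  norm_num

lemma Pstar_ind (c : ∀ i, W i) : Pstar (fun x => if x = c then (1:ℝ) else 0) := by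
  refine ⟨0, ⟨fun ℓ => le_refl 0, fun S _ => ?_⟩, fun ℓ => ?_⟩ <;>
    simp [condEnt, margEnt_ind]

end MWRC



open MWRC Finset

/-- For every `L ≥ 3` there are finite alphabets and joint pmfs
`p, p' ∈ 𝒫*` whose midpoint `(p + p')/2` is not in `𝒫*`: `𝒫*` is not convex. -/
theorem stmt5 (L : ℕ) (hL : 3 ≤ L) :
    ∃ (n : Fin L → ℕ) (p p' : (∀ i, Fin (n i)) → ℝ),
      IsPMF p ∧ IsPMF p' ∧ Pstar p ∧ Pstar p' ∧
        IsPMF (fun x => (p x + p' x) / 2) ∧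
        ¬ Pstar (fun x => (p x + p' x) / 2) := by
  set a : ∀ i : Fin L, Fin 2 := fun _ => 0 with ha
  set b : ∀ i : Fin L, Fin 2 := fun i => if i.val < 2 then 1 else 0 with hb
  have i0 : Fin L := ⟨0, by omega⟩
  have hi1 : (1:ℕ) < L := by omega
  have hab : a ≠ b := by
    intro h
    have := congrFun h ⟨1, hi1⟩
    simp [ha, hb] at this
  refine ⟨fun _ => 2, fun x => if x = a then 1 else 0, fun x => if x = b then 1 else 0,
    ⟨fun x => by dsimp only; split_ifs <;> norm_num, by simp [Finset.sum_ite_eq']⟩,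
    ⟨fun x => by dsimp only; split_ifs <;> norm_num, by simp [Finset.sum_ite_eq']⟩,
    Pstar_ind a, Pstar_ind b, ?_, ?_⟩
  · constructor
    · intro x; dsimp only; split_ifs <;> norm_num
    · rw [← Finset.sum_div, Finset.sum_add_distrib]
      simp [Finset.sum_ite_eq']
  · have hq : (fun x : ∀ i : Fin L, Fin 2 =>
        ((if x = a then (1:ℝ) else 0) + (if x = b then 1 else 0)) / 2)
        = (fun x => (if x = a then (1:ℝ)/2 else 0) + (if x = b then 1/2 else 0)) := by
      funext x
      by_cases h1 : x = a
      · have h2 : x ≠ b := h1 ▸ hab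
        simp [h1, h2, hab]
      · by_cases h2 : x = b
        · simp [h1, h2, Ne.symm hab]
        · simp [h1, h2]
    rw [show (fun x : ∀ i : Fin L, Fin 2 =>
        ((fun x => if x = a then (1:ℝ) else 0) x + (fun x => if x = b then (1:ℝ) else 0) x) / 2)
        = (fun x => (if x = a then (1:ℝ)/2 else 0) + (if x = b then 1/2 else 0)) from hq]
    rintro ⟨r, ⟨hr0, -⟩, hr⟩
    set i0 : Fin L := ⟨0, by omega⟩ with hdef0
    set i1 : Fin L := ⟨1, by omega⟩ with hdef1
    set i2 : Fin L := ⟨2, by omega⟩ with hdef2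
    -- entropy values
    have hEuniv : margEnt (fun x => (if x = a then (1:ℝ)/2 else 0) + (if x = b then 1/2 else 0))
        Finset.univ = 1 := by
      apply margEnt_two_ne
      intro h
      have := congrFun h ⟨i1, Finset.mem_univ _⟩
      simp [ha, hb, hdef1] at this
    have hE0 : margEnt (fun x => (if x = a then (1:ℝ)/2 else 0) + (if x = b then 1/2 else 0))
        ({i0} : Finset (Fin L)) = 1 := by
      apply margEnt_two_ne
      intro h
      have := congrFun h ⟨i0, Finset.mem_singleton_self _⟩
      simp [ha, hb, hdef0] at this
    have hE1 : margEnt (fun x => (if x = a then (1:ℝ)/2 else 0) + (if x = b then 1/2 else 0))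
        ({i1} : Finset (Fin L)) = 1 := by
      apply margEnt_two_ne
      intro h
      have := congrFun h ⟨i1, Finset.mem_singleton_self _⟩
      simp [ha, hb, hdef1] at this
    have hE2 : margEnt (fun x => (if x = a then (1:ℝ)/2 else 0) + (if x = b then 1/2 else 0))
        ({i2} : Finset (Fin L)) = 0 := by
      apply margEnt_two_eq
      funext j
      have hj : j.1 = i2 := Finset.mem_singleton.mp j.2
      show a j.1 = b j.1
      rw [hj, ha, hb]
      norm_num [hdef2]
    have hcompl : ∀ ℓ : Fin L, ({ℓ}ᶜ : Finset (Fin L)) ∪ {ℓ} = Finset.univ := by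
      intro ℓ; rw [Finset.union_comm, Finset.union_compl]
    have h0 := hr i0
    have h1 := hr i1
    have h2 := hr i2
    rw [condEnt, hcompl, hEuniv, hE0] at h0
    rw [condEnt, hcompl, hEuniv, hE1] at h1
    rw [condEnt, hcompl, hEuniv, hE2] at h2
    norm_num at h0 h1 h2
    -- all r i = 0
    have hz : ∀ i : Fin L, r i = 0 := by
      intro i
      by_cases hi : i = i0
      · subst hi
        have hmem : i0 ∈ ({i1}ᶜ : Finset (Fin L)) := by
          simp [hdef0, hdef1, Fin.ext_iff]
        exact (Finset.sum_eq_zero_iff_of_nonneg (fun j _ => hr0 j)).mp h1 i0 hmem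
      · have hmem : i ∈ ({i0}ᶜ : Finset (Fin L)) := by simp [hi]
        exact (Finset.sum_eq_zero_iff_of_nonneg (fun j _ => hr0 j)).mp h0 i hmem
    rw [Finset.sum_eq_zero (fun i _ => hz i)] at h2
    norm_num at h2
end

section
/- Let L = 3. If the source (W_1,W_2,W_3) ~ p satisfies I(W_i;W_j|W_k) ≤ I(W_j;W_k|W_i) + I(W_i;W_k|W_j) for all choices of distinct indices i,j,k ∈ [1,3], then p ∈ 𝒫*; in particular the tuple r* with components r*_1 = ½(H(W_1,W_2|W_3) + H(W_1,W_3|W_2) − H(W_2,W_3|W_1)), r*_2 = ½(H(W_1,W_2|W_3) + H(W_2,W_3|W_1) − H(W_1,W_3|W_2)), r*_3 = ½(H(W_1,W_3|W_2) + H(W_2,W_3|W_1) − H(W_1,W_2|W_3)) belongs to R(p). -/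
open Finset Real

namespace MWRC

variable {L : ℕ} {W : Fin L → Type*} [∀ i, Fintype (W i)] [∀ i, DecidableEq (W i)]

lemma le_marg (p : (∀ i, W i) → ℝ) (hp : IsPMF p) (A : Finset (Fin L)) (x : ∀ i, W i) :
    p x ≤ marg p A (fun j => x j.1) := by
  have := Finset.single_le_sum (f := fun x' : ∀ i, W i =>
      if (fun j : {a : Fin L // a ∈ A} => x' j.1) = (fun j : {a : Fin L // a ∈ A} => x j.1)
      then p x' else 0)
    (fun x' _ => by split <;> [exact hp.1 x'; exact le_rfl]) (Finset.mem_univ x)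
  simpa [marg] using this

lemma margEnt_eq_sum (p : (∀ i, W i) → ℝ) (A : Finset (Fin L)) :
    margEnt p A = -∑ x : ∀ i, W i,
      p x * Real.logb 2 (marg p A (fun j => x j.1)) := by
  have key : ∀ y, marg p A y * Real.logb 2 (marg p A y)
      = ∑ x : ∀ i, W i, if (fun j : {a : Fin L // a ∈ A} => x j.1) = y
          then p x * Real.logb 2 (marg p A y) else 0 := by
    intro y
    rw [marg, Finset.sum_mul]
    exact Finset.sum_congr rfl fun x _ => by rw [ite_mul, zero_mul]
  unfold margEnt
  congr 1
  rw [Finset.sum_congr rfl (fun y _ => key y), Finset.sum_comm]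
  refine Finset.sum_congr rfl fun x _ => ?_
  rw [Finset.sum_eq_single_of_mem (fun j : {a : Fin L // a ∈ A} => x j.1) (Finset.mem_univ _)]
  · rw [if_pos rfl]
  · intro y _ hne
    exact if_neg fun h => hne h.symm

lemma marg_univ (p : (∀ i, W i) → ℝ) (x : ∀ i, W i) :
    marg p Finset.univ (fun j => x j.1) = p x := by
  unfold marg
  rw [Finset.sum_eq_single_of_mem x (Finset.mem_univ x)]
  · simp
  · intro x' _ hne
    rw [if_neg]
    intro h
    exact hne (funext fun i => congrFun h ⟨i, Finset.mem_univ i⟩)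

lemma margEnt_le_univ (p : (∀ i, W i) → ℝ) (hp : IsPMF p) (A : Finset (Fin L)) :
    margEnt p A ≤ margEnt p Finset.univ := by
  rw [margEnt_eq_sum p A, margEnt_eq_sum p Finset.univ, neg_le_neg_iff]
  refine Finset.sum_le_sum fun x _ => ?_
  rw [marg_univ]
  rcases eq_or_lt_of_le (hp.1 x) with h | h
  · rw [← h]; simp
  · exact mul_le_mul_of_nonneg_left
      (Real.logb_le_logb_of_le (by norm_num) h (le_marg p hp A x)) (hp.1 x)

end MWRC


open MWRC Finset

/-- For `L = 3`: if `I(W_i;W_j|W_k) ≤ I(W_j;W_k|W_i) + I(W_i;W_k|W_j)`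
for all distinct `i,j,k`, then `p ∈ 𝒫*`; in particular the explicit tuple `r*` belongs
to `R(p)`. -/
theorem stmt6 {W : Fin 3 → Type*} [∀ i, Fintype (W i)] [∀ i, DecidableEq (W i)]
    (p : (∀ i, W i) → ℝ) (hp : IsPMF p)
    (hbal : ∀ i j k : Fin 3, i ≠ j → j ≠ k → i ≠ k →
      condMI p {i} {j} {k} ≤ condMI p {j} {k} {i} + condMI p {i} {k} {j}) :
    Pstar p ∧
      (![(condEnt p {0, 1} {2} + condEnt p {0, 2} {1} - condEnt p {1, 2} {0}) / 2,
         (condEnt p {0, 1} {2} + condEnt p {1, 2} {0} - condEnt p {0, 2} {1}) / 2,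
         (condEnt p {0, 2} {1} + condEnt p {1, 2} {0} - condEnt p {0, 1} {2}) / 2] :
        Fin 3 → ℝ) ∈ Rset p := by
  have ua : ({1} : Finset (Fin 3)) ∪ {0} = {0, 1} := by decide
  have ub : ({2} : Finset (Fin 3)) ∪ {0} = {0, 2} := by decide
  have uc : ({2} : Finset (Fin 3)) ∪ {1} = {1, 2} := by decide
  have ud : ({0} : Finset (Fin 3)) ∪ {1} = {0, 1} := by decide
  have ue : ({0} : Finset (Fin 3)) ∪ {2} = {0, 2} := by decide
  have uf : ({1} : Finset (Fin 3)) ∪ {2} = {1, 2} := by decide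
  have u1 : ({0, 1} : Finset (Fin 3)) ∪ {2} = Finset.univ := by decide
  have u2 : ({0, 2} : Finset (Fin 3)) ∪ {1} = Finset.univ := by decide
  have u3 : ({1, 2} : Finset (Fin 3)) ∪ {0} = Finset.univ := by decide
  have u4 : ({0} : Finset (Fin 3)) ∪ {1, 2} = Finset.univ := by decide
  have u5 : ({1} : Finset (Fin 3)) ∪ {0, 2} = Finset.univ := by decide
  have u6 : ({2} : Finset (Fin 3)) ∪ {0, 1} = Finset.univ := by decide
  have c0 : ({0} : Finset (Fin 3))ᶜ = {1, 2} := by decide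
  have c1 : ({1} : Finset (Fin 3))ᶜ = {0, 2} := by decide
  have c2 : ({2} : Finset (Fin 3))ᶜ = {0, 1} := by decide
  have c01 : ({0, 1} : Finset (Fin 3))ᶜ = {2} := by decide
  have c02 : ({0, 2} : Finset (Fin 3))ᶜ = {1} := by decide
  have c12 : ({1, 2} : Finset (Fin 3))ᶜ = {0} := by decide
  have ce : (∅ : Finset (Fin 3))ᶜ = Finset.univ := by decide
  have hb1 := hbal 1 2 0 (by decide) (by decide) (by decide)
  have hb2 := hbal 0 2 1 (by decide) (by decide) (by decide)
  have hb3 := hbal 0 1 2 (by decide) (by decide) (by decide)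
  have m01 := margEnt_le_univ p hp ({0, 1} : Finset (Fin 3))
  have m02 := margEnt_le_univ p hp ({0, 2} : Finset (Fin 3))
  have m12 := margEnt_le_univ p hp ({1, 2} : Finset (Fin 3))
  simp only [condMI, condEnt, ua, ub, uc, ud, ue, uf, u1, u2, u3, u4, u5, u6] at hb1 hb2 hb3
  set r : Fin 3 → ℝ :=
      ![(condEnt p {0, 1} {2} + condEnt p {0, 2} {1} - condEnt p {1, 2} {0}) / 2,
        (condEnt p {0, 1} {2} + condEnt p {1, 2} {0} - condEnt p {0, 2} {1}) / 2,
        (condEnt p {0, 2} {1} + condEnt p {1, 2} {0} - condEnt p {0, 1} {2}) / 2] with hrdef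
  have hr0 : r 0 = (condEnt p {0, 1} {2} + condEnt p {0, 2} {1} - condEnt p {1, 2} {0}) / 2 := rfl
  have hr1 : r 1 = (condEnt p {0, 1} {2} + condEnt p {1, 2} {0} - condEnt p {0, 2} {1}) / 2 := rfl
  have hr2 : r 2 = (condEnt p {0, 2} {1} + condEnt p {1, 2} {0} - condEnt p {0, 1} {2}) / 2 := rfl
  simp only [condEnt, u1, u2, u3] at hr0 hr1 hr2
  have hR : r ∈ Rset p := by
    constructor
    · intro ℓ
      fin_cases ℓ
      · rw [show (⟨0, by norm_num⟩ : Fin 3) = 0 from rfl, hr0]; linarith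
      · rw [show (⟨1, by norm_num⟩ : Fin 3) = 1 from rfl, hr1]; linarith
      · rw [show (⟨2, by norm_num⟩ : Fin 3) = 2 from rfl, hr2]; linarith
    · intro S hS
      have classify : ∀ S : Finset (Fin 3), S = ∅ ∨ S = {0} ∨ S = {1} ∨ S = {2} ∨
          S = {0, 1} ∨ S = {0, 2} ∨ S = {1, 2} ∨ S = Finset.univ := by decide
      rcases classify S with rfl | rfl | rfl | rfl | rfl | rfl | rfl | rfl
      · simp only [condEnt, ce, Finset.empty_union, Finset.sum_empty, sub_self, le_refl]
      · rw [condEnt, c0, u4, Finset.sum_singleton, hr0]; linarith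
      · rw [condEnt, c1, u5, Finset.sum_singleton, hr1]; linarith
      · rw [condEnt, c2, u6, Finset.sum_singleton, hr2]; linarith
      · rw [condEnt, c01, u1, Finset.sum_pair (by decide : (0 : Fin 3) ≠ 1), hr0, hr1]; linarith
      · rw [condEnt, c02, u2, Finset.sum_pair (by decide : (0 : Fin 3) ≠ 2), hr0, hr2]; linarith
      · rw [condEnt, c12, u3, Finset.sum_pair (by decide : (1 : Fin 3) ≠ 2), hr1, hr2]; linarith
      · exact absurd rfl hS.ne
  refine ⟨⟨r, hR, fun ℓ => ?_⟩, hR⟩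
  fin_cases ℓ
  · rw [show (⟨0, by norm_num⟩ : Fin 3) = 0 from rfl, c0, condEnt, u3,
      Finset.sum_pair (by decide : (1 : Fin 3) ≠ 2), hr1, hr2]; linarith
  · rw [show (⟨1, by norm_num⟩ : Fin 3) = 1 from rfl, c1, condEnt, u2,
      Finset.sum_pair (by decide : (0 : Fin 3) ≠ 2), hr0, hr2]; linarith
  · rw [show (⟨2, by norm_num⟩ : Fin 3) = 2 from rfl, c2, condEnt, u1,
      Finset.sum_pair (by decide : (0 : Fin 3) ≠ 1), hr0, hr1]; linarith
end

section
/- For every joint pmf p, the tuple r†(p) equals r*(p); that is, for every ℓ ∈ [1,L], Σ_{K⊂[1,L]} J_ℓ(K) = ‖h(p)‖/(L−1) − H(W_{ℓᶜ}|W_ℓ). Equivalently, r†(p) satisfies Σ_{i∈ℓᶜ} r†_i = H(W_{ℓᶜ}|W_ℓ) for every ℓ ∈ [1,L]. -/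
open Finset Real

open Finset

namespace Stmt11Aux

variable {α : Type*} [DecidableEq α]

lemma negpow_cancel (n : ℕ) : (-1 : ℝ) ^ n * (-1) ^ n = 1 := by
  rw [← pow_add, ← two_mul, pow_mul]; norm_num

lemma negpow_sub {m n : ℕ} (h : m ≤ n) : (-1 : ℝ) ^ (n - m) = (-1) ^ n * (-1) ^ m := by
  have h2 := pow_add (-1 : ℝ) (n - m) m
  rw [Nat.sub_add_cancel h] at h2
  calc (-1 : ℝ) ^ (n - m) = (-1 : ℝ) ^ (n - m) * ((-1) ^ m * (-1) ^ m) := by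
        rw [negpow_cancel, mul_one]
    _ = ((-1 : ℝ) ^ (n - m) * (-1) ^ m) * (-1) ^ m := by ring
    _ = (-1) ^ n * (-1) ^ m := by rw [← h2]

lemma negpow_succ_mul (n : ℕ) (hn : 1 ≤ n) : (-1 : ℝ) ^ (n - 1) * (-1) ^ n = -1 := by
  have : (-1 : ℝ) ^ n = (-1) ^ (n - 1) * (-1) := by
    rw [← pow_succ, Nat.sub_add_cancel hn]
  rw [this]
  have := negpow_cancel (n - 1)
  nlinarith [negpow_cancel (n-1)]

lemma sum_pow_card (s : Finset α) :
    ∑ T ∈ s.powerset, (-1 : ℝ) ^ T.card = if s = ∅ then 1 else 0 := by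
  have h := Finset.sum_powerset_neg_one_pow_card (x := s)
  have : ((∑ m ∈ s.powerset, (-1 : ℤ) ^ m.card : ℤ) : ℝ)
      = ∑ T ∈ s.powerset, (-1 : ℝ) ^ T.card := by push_cast; rfl
  rw [← this, h]
  split <;> norm_num

lemma sum_pow_card_mem (s : Finset α) (x : α) :
    ∑ T ∈ s.powerset, (if x ∈ T then (-1 : ℝ) ^ T.card else 0)
      = if s = {x} then -1 else 0 := by
  by_cases hx : x ∈ s
  · rw [← Finset.sum_filter]
    have key : ∑ T ∈ s.powerset.filter (fun T => x ∈ T), (-1 : ℝ) ^ T.card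
        = ∑ T ∈ (s.erase x).powerset, -((-1 : ℝ) ^ T.card) := by
      refine Finset.sum_nbij' (i := fun T => T.erase x) (j := fun T => insert x T) ?_ ?_ ?_ ?_ ?_
      · intro T hT
        simp only [mem_filter, mem_powerset] at hT
        exact Finset.mem_powerset.2 (Finset.erase_subset_erase x hT.1)
      · intro T hT
        simp only [mem_powerset] at hT
        simp only [mem_filter, mem_powerset]
        refine ⟨Finset.insert_subset hx (hT.trans (Finset.erase_subset x s)), Finset.mem_insert_self x T⟩
      · intro T hT
        simp only [mem_filter] at hT
        exact Finset.insert_erase hT.2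
      · intro T hT
        simp only [mem_powerset] at hT
        exact Finset.erase_insert (fun hmem => (Finset.mem_erase.1 (hT hmem)).1 rfl)
      · intro T hT
        simp only [mem_filter, mem_powerset] at hT
        have h1 : 1 ≤ T.card := Finset.card_pos.2 ⟨x, hT.2⟩
        have hc : T.card = (T.erase x).card + 1 := by
          rw [Finset.card_erase_of_mem hT.2]; omega
        rw [hc, pow_succ]; ring
    rw [key]
    have h2 : ∑ T ∈ (s.erase x).powerset, -((-1 : ℝ) ^ T.card)
        = -∑ T ∈ (s.erase x).powerset, ((-1 : ℝ) ^ T.card) := by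
      rw [Finset.sum_neg_distrib]
    rw [h2, sum_pow_card]
    have hne : s ≠ ∅ := Finset.ne_empty_of_mem hx
    have : s.erase x = ∅ ↔ s = {x} := by
      rw [Finset.erase_eq_empty_iff]
      constructor
      · rintro (h | h)
        · exact absurd h hne
        · exact h
      · intro h; right; exact h
    simp only [this]
    split <;> norm_num
  · have h1 : ∀ T ∈ s.powerset, (if x ∈ T then (-1 : ℝ) ^ T.card else 0) = 0 := by
      intro T hT
      rw [if_neg]
      intro hxT
      exact hx (Finset.mem_powerset.1 hT hxT)
    rw [Finset.sum_eq_zero h1, if_neg]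
    intro h; rw [h] at hx; simp at hx


lemma sum_pow_card_mul_card (s : Finset α) :
    ∑ T ∈ s.powerset, (-1 : ℝ) ^ T.card * T.card = if s.card = 1 then -1 else 0 := by
  have h1 : ∀ T ∈ s.powerset, (-1 : ℝ) ^ T.card * T.card
      = ∑ x ∈ s, (if x ∈ T then (-1 : ℝ) ^ T.card else 0) := by
    intro T hT
    rw [Finset.sum_ite_mem, Finset.inter_eq_right.2 (Finset.mem_powerset.1 hT),
      Finset.sum_const, nsmul_eq_mul]
    ring
  rw [Finset.sum_congr rfl h1, Finset.sum_comm,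
    Finset.sum_congr rfl (fun x _ => sum_pow_card_mem s x)]
  by_cases hc : s.card = 1
  · obtain ⟨a, rfl⟩ := Finset.card_eq_one.1 hc
    simp
  · rw [Finset.sum_eq_zero, if_neg hc]
    intro x hx
    rw [if_neg]
    intro h; rw [h] at hc; simp at hc

lemma sum_powerset_split (s : Finset α) (F : Finset α → ℝ) :
    ∑ T ∈ s.powerset, F T = F ∅ + ∑ T ∈ s.powerset.filter (fun T => T ≠ ∅), F T := by
  have h := Finset.sum_filter_add_sum_filter_not s.powerset (fun T => T = ∅) F
  have he : s.powerset.filter (fun T => T = ∅) = {∅} := by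
    ext T
    simp only [Finset.mem_filter, Finset.mem_powerset, Finset.mem_singleton]
    constructor
    · rintro ⟨_, h⟩; exact h
    · rintro rfl; exact ⟨Finset.empty_subset s, rfl⟩
  rw [← h, he, Finset.sum_singleton]

lemma sum_powerset_split2 (s : Finset α) (hs : s ≠ ∅) (F : Finset α → ℝ) :
    ∑ T ∈ s.powerset, F T
      = F ∅ + F s + ∑ T ∈ s.powerset.filter (fun T => T ≠ ∅ ∧ T ≠ s), F T := by
  have h := Finset.sum_filter_add_sum_filter_not s.powerset (fun T => T = ∅ ∨ T = s) F
  have he : s.powerset.filter (fun T => T = ∅ ∨ T = s) = {∅, s} := by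
    ext T
    simp only [Finset.mem_filter, Finset.mem_powerset, Finset.mem_insert, Finset.mem_singleton]
    constructor
    · rintro ⟨_, h⟩; exact h
    · rintro (rfl | rfl)
      · exact ⟨Finset.empty_subset _, Or.inl rfl⟩
      · exact ⟨Finset.Subset.refl _, Or.inr rfl⟩
  have hne : (∅ : Finset α) ≠ s := fun h => hs h.symm
  have hfn : s.powerset.filter (fun T => ¬(T = ∅ ∨ T = s))
      = s.powerset.filter (fun T => T ≠ ∅ ∧ T ≠ s) :=
    Finset.filter_congr (fun T _ => not_or)
  rw [← h, he, Finset.sum_pair hne, hfn, add_assoc]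


end Stmt11Aux

section Stmt11Main

open MWRC Finset Stmt11Aux

namespace Stmt11Aux

/-- The simplified coefficient `c_ℓ(Mᶜ)`. -/
noncomputable def cc (L : ℕ) (ℓ : Fin L) (M : Finset (Fin L)) : ℝ :=
  (M.card : ℝ) / ((L : ℝ) - 1) - (if ℓ ∈ M then 1 else 0)

lemma sum_pow_pred {α : Type*} [DecidableEq α] (s : Finset α) :
    ∑ T ∈ s.powerset.filter (fun T => T ≠ ∅), (-1 : ℝ) ^ (T.card - 1)
      = if s = ∅ then 0 else 1 := by
  have h1 : ∑ T ∈ s.powerset.filter (fun T => T ≠ ∅), (-1 : ℝ) ^ (T.card - 1)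
      = ∑ T ∈ s.powerset.filter (fun T => T ≠ ∅), -((-1 : ℝ) ^ T.card) := by
    refine Finset.sum_congr rfl fun T hT => ?_
    have hne : T ≠ ∅ := (Finset.mem_filter.1 hT).2
    have hc1 : 1 ≤ T.card := Finset.card_pos.2 (Finset.nonempty_iff_ne_empty.2 hne)
    have h : (-1 : ℝ) ^ T.card = (-1) ^ (T.card - 1) * (-1) := by
      rw [← pow_succ, Nat.sub_add_cancel hc1]
    rw [h]; ring
  have h2 := sum_powerset_split s (fun T => -((-1 : ℝ) ^ T.card))
  have h4 : ∑ T ∈ s.powerset, -((-1 : ℝ) ^ T.card) = -(if s = ∅ then (1 : ℝ) else 0) := by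
    rw [Finset.sum_neg_distrib, sum_pow_card]
  rw [h4] at h2
  simp only [Finset.card_empty, pow_zero] at h2
  rw [h1]
  by_cases hs : s = ∅
  · rw [if_pos hs]; rw [if_pos hs] at h2; linarith
  · rw [if_neg hs]; rw [if_neg hs] at h2; linarith

end Stmt11Aux

variable {L : ℕ} {W : Fin L → Type*} [∀ i, Fintype (W i)] [∀ i, DecidableEq (W i)]

lemma compl_eq_empty_iff' (B : Finset (Fin L)) : Bᶜ = ∅ ↔ B = Finset.univ := by
  constructor
  · intro h
    rw [← compl_compl B, h, Finset.compl_empty]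
  · intro h
    rw [h, Finset.compl_univ]

lemma rdag_eq_rstar (hL : 2 ≤ L) (p : (∀ i, W i) → ℝ) (ℓ : Fin L) :
    rdag p ℓ = rstar p ℓ := by
  classical
  have hLR : ((L : ℝ) - 1) ≠ 0 := by
    have h2 : (2 : ℝ) ≤ (L : ℝ) := by exact_mod_cast hL
    linarith
  have hcardU : (Finset.univ : Finset (Fin L)).card = L := by simp
  -- Step 0 : `J` in terms of `cc`
  have hJ' : ∀ M : Finset (Fin L), J p ℓ Mᶜ = cc L ℓ M * multiInfo p Mᶜ := by
    intro M
    have hMle : M.card ≤ L := by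
      simpa using Finset.card_le_univ M
    have hccR : (((Mᶜ : Finset (Fin L)).card : ℝ)) = (L : ℝ) - M.card := by
      rw [Finset.card_compl]
      simp only [Fintype.card_fin]
      push_cast [hMle]
      ring
    by_cases hm : ℓ ∈ M
    · have hnot : ¬ ℓ ∈ (Mᶜ : Finset (Fin L)) := by simp [hm]
      rw [J, if_neg hnot, hccR, cc]
      rw [if_pos hm]
      have : (1 - ((L : ℝ) - M.card)) / ((L : ℝ) - 1) = (M.card : ℝ) / ((L : ℝ) - 1) - 1 := by
        field_simp
        ring
      rw [this]
    · have hyes : ℓ ∈ (Mᶜ : Finset (Fin L)) := by simp [hm]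
      rw [J, if_pos hyes, hccR, cc]
      rw [if_neg hm]
      have : ((L : ℝ) - ((L : ℝ) - M.card)) / ((L : ℝ) - 1) = (M.card : ℝ) / ((L : ℝ) - 1) - 0 := by
        ring_nf
      rw [this]
  -- Step 1 : multiInfo as a single sum over nonempty subsets
  have hMI1 : ∀ K : Finset (Fin L), multiInfo p K
      = ∑ T ∈ K.powerset.filter (fun T => T ≠ ∅),
          (-1 : ℝ) ^ (T.card - 1) * condEnt p T Kᶜ := by
    intro K
    have hmaps : ∀ T ∈ K.powerset.filter (fun T => T ≠ ∅),
        T.card ∈ Finset.Icc 1 K.card := by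
      intro T hT
      obtain ⟨hTp, hTne⟩ := Finset.mem_filter.1 hT
      refine Finset.mem_Icc.2 ⟨Finset.card_pos.2 (Finset.nonempty_iff_ne_empty.2 hTne),
        Finset.card_le_card (Finset.mem_powerset.1 hTp)⟩
    calc multiInfo p K
        = ∑ t ∈ Finset.Icc 1 K.card,
            ∑ T ∈ (K.powerset.filter (fun T => T ≠ ∅)).filter (fun T => T.card = t),
              (-1 : ℝ) ^ (T.card - 1) * condEnt p T Kᶜ := by
          rw [multiInfo]
          refine Finset.sum_congr rfl fun t ht => ?_
          have hset : (K.powerset.filter (fun T => T ≠ ∅)).filter (fun T => T.card = t)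
              = K.powerset.filter (fun T => T.card = t) := by
            rw [Finset.filter_filter]
            refine Finset.filter_congr fun T _ => ?_
            simp only [Finset.mem_Icc] at ht
            constructor
            · rintro ⟨_, h⟩; exact h
            · intro h
              refine ⟨?_, h⟩
              intro he
              rw [he, Finset.card_empty] at h
              omega
          rw [Finset.mul_sum, hset]
          exact Finset.sum_congr rfl fun T hT => by rw [(Finset.mem_filter.1 hT).2]
      _ = _ := Finset.sum_fiberwise_of_maps_to hmaps _
  -- Step 2 : multiInfo of a complement
  have hMIc : ∀ M : Finset (Fin L), multiInfo p Mᶜ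
      = (∑ B ∈ Finset.univ.powerset.filter (fun B => M ⊆ B ∧ M ≠ B),
          (-1 : ℝ) ^ (B.card - M.card - 1) * margEnt p B)
        - (if Mᶜ = (∅ : Finset (Fin L)) then 0 else 1) * margEnt p M := by
    intro M
    rw [hMI1]
    have hc1 : ∀ T ∈ (Mᶜ : Finset (Fin L)).powerset.filter (fun T => T ≠ ∅),
        (-1 : ℝ) ^ (T.card - 1) * condEnt p T Mᶜᶜ
          = (-1 : ℝ) ^ (T.card - 1) * margEnt p (T ∪ M)
            - (-1 : ℝ) ^ (T.card - 1) * margEnt p M := by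
      intro T _
      rw [compl_compl, condEnt]
      ring
    rw [Finset.sum_congr rfl hc1, Finset.sum_sub_distrib, ← Finset.sum_mul, sum_pow_pred]
    congr 1
    -- reindex T ↦ T ∪ M
    refine Finset.sum_nbij' (i := fun T => T ∪ M) (j := fun B => B \ M) ?_ ?_ ?_ ?_ ?_
    · intro T hT
      obtain ⟨hTp, hTne⟩ := Finset.mem_filter.1 hT
      have hTsub : T ⊆ Mᶜ := Finset.mem_powerset.1 hTp
      refine Finset.mem_filter.2 ⟨Finset.mem_powerset.2 (Finset.subset_univ _),
        Finset.subset_union_right, ?_⟩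
      intro hMeq
      obtain ⟨a, ha⟩ := Finset.nonempty_iff_ne_empty.2 hTne
      have haM : a ∈ M := by
        rw [hMeq]
        exact Finset.mem_union_left _ ha
      exact (Finset.mem_compl.1 (hTsub ha)) haM
    · intro B hB
      obtain ⟨_, hMB, hMne⟩ := Finset.mem_filter.1 hB
      refine Finset.mem_filter.2 ⟨Finset.mem_powerset.2 ?_, ?_⟩
      · intro a ha
        exact Finset.mem_compl.2 (Finset.mem_sdiff.1 ha).2
      · intro h
        exact hMne (le_antisymm hMB (by
          intro a ha
          by_contra haM
          have : a ∈ B \ M := Finset.mem_sdiff.2 ⟨ha, haM⟩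
          rw [h] at this
          simp at this))
    · intro T hT
      obtain ⟨hTp, _⟩ := Finset.mem_filter.1 hT
      have hTsub : T ⊆ Mᶜ := Finset.mem_powerset.1 hTp
      have hdisj : Disjoint T M := Finset.disjoint_left.2
        (fun a haT haM => (Finset.mem_compl.1 (hTsub haT)) haM)
      exact Finset.union_sdiff_cancel_right hdisj
    · intro B hB
      obtain ⟨_, hMB, _⟩ := Finset.mem_filter.1 hB
      exact Finset.sdiff_union_of_subset hMB
    · intro T hT
      obtain ⟨hTp, _⟩ := Finset.mem_filter.1 hT
      have hTsub : T ⊆ Mᶜ := Finset.mem_powerset.1 hTp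
      have hdisj : Disjoint T M := Finset.disjoint_left.2
        (fun a haT haM => (Finset.mem_compl.1 (hTsub haT)) haM)
      have hcard : (T ∪ M).card = T.card + M.card := Finset.card_union_of_disjoint hdisj
      have hexp : (T ∪ M).card - M.card - 1 = T.card - 1 := by omega
      rw [hexp]
  -- Step 3 : the key coefficient computation
  have hD : ∀ B : Finset (Fin L),
      ∑ M ∈ B.powerset.filter (fun M => M ≠ ∅ ∧ M ≠ B),
          cc L ℓ M * (-1 : ℝ) ^ (B.card - M.card - 1)
        = if B = Finset.univ then 1 / ((L : ℝ) - 1)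
          else if B.card ≤ 1 then 0 else cc L ℓ B := by
    intro B
    by_cases hBsmall : B.card ≤ 1
    · have hMempty : B.powerset.filter (fun M => M ≠ ∅ ∧ M ≠ B) = ∅ := by
        rw [Finset.filter_eq_empty_iff]
        rintro M hM ⟨h1, h2⟩
        have hsub := Finset.mem_powerset.1 hM
        have hc1 : 1 ≤ M.card := Finset.card_pos.2 (Finset.nonempty_iff_ne_empty.2 h1)
        have hc2 : M.card ≤ B.card := Finset.card_le_card hsub
        exact h2 (Finset.eq_of_subset_of_card_le hsub (by omega))
      have hBneU : B ≠ Finset.univ := by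
        intro h
        rw [h, hcardU] at hBsmall
        omega
      rw [hMempty, Finset.sum_empty, if_neg hBneU, if_pos hBsmall]
    · push_neg at hBsmall
      have hBne : B ≠ ∅ := by
        intro h
        rw [h, Finset.card_empty] at hBsmall
        omega
      have hB1 : 1 ≤ B.card := by omega
      have hsign : ∀ M ∈ B.powerset.filter (fun M => M ≠ ∅ ∧ M ≠ B),
          cc L ℓ M * (-1 : ℝ) ^ (B.card - M.card - 1)
            = (-1 : ℝ) ^ (B.card - 1) * (cc L ℓ M * (-1) ^ M.card) := by
        intro M hM
        obtain ⟨hMp, _, hM2⟩ := Finset.mem_filter.1 hM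
        have hlt : M.card < B.card := Finset.card_lt_card
          (Finset.ssubset_iff_subset_ne.2 ⟨Finset.mem_powerset.1 hMp, hM2⟩)
        have hexp : B.card - M.card - 1 = (B.card - 1) - M.card := by omega
        rw [hexp, negpow_sub (by omega : M.card ≤ B.card - 1)]
        ring
      rw [Finset.sum_congr rfl hsign, ← Finset.mul_sum]
      have hsplit := sum_powerset_split2 B hBne (fun M => cc L ℓ M * (-1 : ℝ) ^ M.card)
      have hfull : ∑ M ∈ B.powerset, cc L ℓ M * (-1 : ℝ) ^ M.card
          = (1 / ((L : ℝ) - 1)) * (if B.card = 1 then (-1 : ℝ) else 0)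
            - (if B = {ℓ} then (-1 : ℝ) else 0) := by
        have h1 : ∀ M ∈ B.powerset, cc L ℓ M * (-1 : ℝ) ^ M.card
            = (1 / ((L : ℝ) - 1)) * ((-1 : ℝ) ^ M.card * M.card)
              - (if ℓ ∈ M then (-1 : ℝ) ^ M.card else 0) := by
          intro M _
          rw [cc]
          by_cases hm : ℓ ∈ M
          · rw [if_pos hm, if_pos hm]; ring
          · rw [if_neg hm, if_neg hm]; ring
        rw [Finset.sum_congr rfl h1, Finset.sum_sub_distrib, ← Finset.mul_sum,
          sum_pow_card_mul_card, sum_pow_card_mem]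
      have hF0 : cc L ℓ (∅ : Finset (Fin L)) * (-1 : ℝ) ^ (∅ : Finset (Fin L)).card = 0 := by
        rw [cc]
        simp
      rw [hfull, hF0] at hsplit
      have hE : ∑ M ∈ B.powerset.filter (fun M => M ≠ ∅ ∧ M ≠ B),
          cc L ℓ M * (-1 : ℝ) ^ M.card
            = (1 / ((L : ℝ) - 1)) * (if B.card = 1 then (-1 : ℝ) else 0)
              - (if B = {ℓ} then (-1 : ℝ) else 0) - cc L ℓ B * (-1 : ℝ) ^ B.card := by
        linarith
      rw [hE]
      by_cases hBu : B = Finset.univ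
      · subst hBu
        rw [if_pos rfl]
        have hn1 : ¬ ((Finset.univ : Finset (Fin L)).card = 1) := by
          rw [hcardU]; omega
        have hnl : (Finset.univ : Finset (Fin L)) ≠ {ℓ} := by
          intro h
          have := congrArg Finset.card h
          rw [hcardU, Finset.card_singleton] at this
          omega
        rw [if_neg hn1, if_neg hnl]
        have hccU : cc L ℓ Finset.univ = 1 / ((L : ℝ) - 1) := by
          rw [cc, hcardU, if_pos (Finset.mem_univ ℓ)]
          field_simp
          ring
        rw [hccU, hcardU]
        have hmul := negpow_succ_mul L (by omega)
        have hstep : (-1 : ℝ) ^ (L - 1) * (1 / ((L : ℝ) - 1) * 0 - 0 - 1 / ((L : ℝ) - 1) * (-1) ^ L)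
            = -((-1 : ℝ) ^ (L - 1) * (-1) ^ L) * (1 / ((L : ℝ) - 1)) := by ring
        rw [hstep, hmul]
        ring
      · rw [if_neg hBu, if_neg (by omega : ¬ B.card ≤ 1)]
        have hn1 : ¬ (B.card = 1) := by omega
        have hnl : B ≠ {ℓ} := by
          intro h
          rw [h, Finset.card_singleton] at hBsmall
          omega
        rw [if_neg hn1, if_neg hnl]
        have hmul := negpow_succ_mul B.card hB1
        have hstep : (-1 : ℝ) ^ (B.card - 1)
            * (1 / ((L : ℝ) - 1) * 0 - 0 - cc L ℓ B * (-1) ^ B.card)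
              = -((-1 : ℝ) ^ (B.card - 1) * (-1) ^ B.card) * cc L ℓ B := by ring
        rw [hstep, hmul]
        ring
  -- Step 4 : assemble
  have hstep2 : rdag p ℓ
      = ∑ M ∈ Finset.univ.powerset.filter (fun M => M ≠ ∅), cc L ℓ M * multiInfo p Mᶜ := by
    rw [rdag]
    refine Finset.sum_nbij' (i := fun K => Kᶜ) (j := fun M => Mᶜ) ?_ ?_ ?_ ?_ ?_
    · intro K hK
      obtain ⟨_, hKne⟩ := Finset.mem_filter.1 hK
      refine Finset.mem_filter.2 ⟨Finset.mem_powerset.2 (Finset.subset_univ _), ?_⟩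
      intro h
      exact hKne ((compl_eq_empty_iff' K).1 h)
    · intro M hM
      obtain ⟨_, hMne⟩ := Finset.mem_filter.1 hM
      refine Finset.mem_filter.2 ⟨Finset.mem_powerset.2 (Finset.subset_univ _), ?_⟩
      intro h
      apply hMne
      rw [← compl_compl M, h, Finset.compl_univ]
    · intro K _; exact compl_compl K
    · intro M _; exact compl_compl M
    · intro K _
      have h := hJ' Kᶜ
      rw [compl_compl] at h
      calc J p ℓ K = cc L ℓ Kᶜ * multiInfo p K := h
        _ = cc L ℓ Kᶜ * multiInfo p Kᶜᶜ := by rw [compl_compl]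
  rw [hstep2]
  have hstep3 : ∑ M ∈ Finset.univ.powerset.filter (fun M => M ≠ ∅), cc L ℓ M * multiInfo p Mᶜ
      = (∑ M ∈ Finset.univ.powerset.filter (fun M => M ≠ ∅),
          ∑ B ∈ Finset.univ.powerset.filter (fun B => M ⊆ B ∧ M ≠ B),
            cc L ℓ M * ((-1 : ℝ) ^ (B.card - M.card - 1) * margEnt p B))
        - ∑ M ∈ Finset.univ.powerset.filter (fun M => M ≠ ∅),
            cc L ℓ M * (if Mᶜ = (∅ : Finset (Fin L)) then 0 else 1) * margEnt p M := by
    rw [← Finset.sum_sub_distrib]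
    refine Finset.sum_congr rfl fun M _ => ?_
    rw [hMIc M, mul_sub, Finset.mul_sum]
    ring
  rw [hstep3]
  have hswap : ∑ M ∈ Finset.univ.powerset.filter (fun M => M ≠ ∅),
      ∑ B ∈ Finset.univ.powerset.filter (fun B => M ⊆ B ∧ M ≠ B),
        cc L ℓ M * ((-1 : ℝ) ^ (B.card - M.card - 1) * margEnt p B)
      = ∑ B ∈ Finset.univ.powerset,
          ∑ M ∈ B.powerset.filter (fun M => M ≠ ∅ ∧ M ≠ B),
            cc L ℓ M * ((-1 : ℝ) ^ (B.card - M.card - 1) * margEnt p B) := by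
    refine Finset.sum_comm' fun M B => ?_
    simp only [Finset.mem_filter, Finset.mem_powerset, Finset.subset_univ, true_and, and_true]
    tauto
  rw [hswap]
  have hstep5 : ∀ B ∈ Finset.univ.powerset,
      ∑ M ∈ B.powerset.filter (fun M => M ≠ ∅ ∧ M ≠ B),
          cc L ℓ M * ((-1 : ℝ) ^ (B.card - M.card - 1) * margEnt p B)
        = (if B = Finset.univ then 1 / ((L : ℝ) - 1)
            else if B.card ≤ 1 then 0 else cc L ℓ B) * margEnt p B := by
    intro B _
    rw [← hD B, Finset.sum_mul]
    exact Finset.sum_congr rfl fun M _ => by ring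
  rw [Finset.sum_congr rfl hstep5]
  have hP2 : ∑ M ∈ Finset.univ.powerset.filter (fun M => M ≠ ∅),
      cc L ℓ M * (if Mᶜ = (∅ : Finset (Fin L)) then 0 else 1) * margEnt p M
      = ∑ M ∈ Finset.univ.powerset,
          (if M ≠ ∅ then cc L ℓ M * (if Mᶜ = (∅ : Finset (Fin L)) then 0 else 1) * margEnt p M
            else 0) := by
    rw [Finset.sum_filter]
  rw [hP2, ← Finset.sum_sub_distrib]
  have hgB : ∀ B ∈ Finset.univ.powerset,
      (if B = Finset.univ then 1 / ((L : ℝ) - 1) else if B.card ≤ 1 then 0 else cc L ℓ B)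
          * margEnt p B
        - (if B ≠ ∅ then cc L ℓ B * (if Bᶜ = (∅ : Finset (Fin L)) then 0 else 1) * margEnt p B
            else 0)
      = (if B = Finset.univ then margEnt p B / ((L : ℝ) - 1) else 0)
        + (if B.card = 1 then -(cc L ℓ B * margEnt p B) else 0) := by
    intro B _
    by_cases hBu : B = Finset.univ
    · subst hBu
      have hne : (Finset.univ : Finset (Fin L)) ≠ ∅ := by
        intro h
        rw [h, Finset.card_empty] at hcardU
        omega
      rw [if_pos rfl, if_pos rfl, if_pos hne, if_pos ((compl_eq_empty_iff' _).2 rfl),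
        if_neg (by rw [hcardU]; omega : ¬ (Finset.univ : Finset (Fin L)).card = 1)]
      ring
    · rw [if_neg hBu, if_neg hBu]
      by_cases hB0 : B = ∅
      · subst hB0
        rw [if_pos (by simp : (∅ : Finset (Fin L)).card ≤ 1),
          if_neg (by simp : ¬ (∅ : Finset (Fin L)) ≠ ∅),
          if_neg (by simp : ¬ (∅ : Finset (Fin L)).card = 1)]
        ring
      · have hBcompl : ¬ (Bᶜ = (∅ : Finset (Fin L))) := by
          intro h
          exact hBu ((compl_eq_empty_iff' B).1 h)
        rw [if_pos hB0, if_neg hBcompl]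
        by_cases hB1 : B.card = 1
        · rw [if_pos (by omega : B.card ≤ 1), if_pos hB1]
          ring
        · have hB2 : ¬ B.card ≤ 1 := by
            have : B.card ≠ 0 := fun h => hB0 (Finset.card_eq_zero.1 h)
            omega
          rw [if_neg hB2, if_neg hB1]
          ring
  rw [Finset.sum_congr rfl hgB, Finset.sum_add_distrib]
  have hsum1 : ∑ B ∈ Finset.univ.powerset,
      (if B = Finset.univ then margEnt p B / ((L : ℝ) - 1) else 0)
      = margEnt p Finset.univ / ((L : ℝ) - 1) := by
    rw [Finset.sum_ite_eq' Finset.univ.powerset Finset.univ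
      (fun B => margEnt p B / ((L : ℝ) - 1))]
    rw [if_pos (Finset.mem_powerset_self _)]
  have hsum2 : ∑ B ∈ Finset.univ.powerset,
      (if B.card = 1 then -(cc L ℓ B * margEnt p B) else 0)
      = ∑ m : Fin L, -(cc L ℓ {m} * margEnt p {m}) := by
    rw [← Finset.sum_filter]
    refine (Finset.sum_bij (i := fun (m : Fin L) _ => ({m} : Finset (Fin L))) ?_ ?_ ?_ ?_).symm
    · intro m _
      exact Finset.mem_filter.2 ⟨Finset.mem_powerset.2 (Finset.subset_univ _),
        Finset.card_singleton m⟩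
    · intro a _ b _ h
      exact Finset.singleton_injective h
    · intro B hB
      obtain ⟨m, rfl⟩ := Finset.card_eq_one.1 (Finset.mem_filter.1 hB).2
      exact ⟨m, Finset.mem_univ m, rfl⟩
    · intro m _
      rfl
  rw [hsum1, hsum2]
  have hsingle : ∀ m : Fin L, -(cc L ℓ {m} * margEnt p {m})
      = -(1 / ((L : ℝ) - 1)) * margEnt p {m}
        + (if ℓ = m then margEnt p {m} else 0) := by
    intro m
    rw [cc, Finset.card_singleton]
    by_cases hm : ℓ = m
    · rw [if_pos hm]
      rw [if_pos (Finset.mem_singleton.2 hm)]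
      push_cast
      ring
    · rw [if_neg hm, if_neg (fun h => hm (Finset.mem_singleton.1 h))]
      push_cast
      ring
  rw [Finset.sum_congr rfl (fun m _ => hsingle m), Finset.sum_add_distrib,
    ← Finset.mul_sum, Finset.sum_ite_eq Finset.univ ℓ (fun m => margEnt p {m}),
    if_pos (Finset.mem_univ ℓ)]
  -- Now evaluate rstar
  have hcond : ∀ m : Fin L, condEnt p ({m}ᶜ) {m} = margEnt p Finset.univ - margEnt p {m} := by
    intro m
    rw [condEnt]
    congr 2
    ext a
    simp only [Finset.mem_union, Finset.mem_compl, Finset.mem_singleton, Finset.mem_univ,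
      iff_true]
    tauto
  have hnorm : hNorm p = (L : ℝ) * margEnt p Finset.univ - ∑ m : Fin L, margEnt p {m} := by
    rw [hNorm, Finset.sum_congr rfl (fun m _ => hcond m), Finset.sum_sub_distrib,
      Finset.sum_const, Finset.card_univ, Fintype.card_fin, nsmul_eq_mul]
  rw [rstar, hnorm, hcond ℓ]
  field_simp
  ring

end Stmt11Main

open MWRC Finset

/-- For every joint pmf `p`, `r†(p) = r*(p)`; equivalently
`Σ_{i ∈ ℓᶜ} r†_i = H(W_{ℓᶜ}|W_ℓ)` for every `ℓ`. -/
theorem stmt11 {L : ℕ} (hL : 2 ≤ L) {W : Fin L → Type*} [∀ i, Fintype (W i)]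
    [∀ i, DecidableEq (W i)] (p : (∀ i, W i) → ℝ) (hp : IsPMF p) :
    (∀ ℓ : Fin L, rdag p ℓ = rstar p ℓ) ∧
      ∀ ℓ : Fin L, ∑ i ∈ ({ℓ}ᶜ : Finset (Fin L)), rdag p i = condEnt p {ℓ}ᶜ {ℓ} := by
  have h1 : ∀ ℓ : Fin L, rdag p ℓ = rstar p ℓ := fun ℓ => rdag_eq_rstar hL p ℓ
  refine ⟨h1, fun ℓ => ?_⟩
  have hLR : ((L : ℝ) - 1) ≠ 0 := by
    have h2 : (2 : ℝ) ≤ (L : ℝ) := by exact_mod_cast hL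
    linarith
  have hcardc : (({ℓ}ᶜ : Finset (Fin L)).card : ℝ) = (L : ℝ) - 1 := by
    rw [Finset.card_compl, Finset.card_singleton, Fintype.card_fin]
    have : 1 ≤ L := by omega
    push_cast [this]
    ring
  have hsplit : ∑ i ∈ ({ℓ}ᶜ : Finset (Fin L)), condEnt p {i}ᶜ {i}
      = hNorm p - condEnt p {ℓ}ᶜ {ℓ} := by
    have h := Finset.sum_compl_add_sum ({ℓ} : Finset (Fin L)) (fun i => condEnt p {i}ᶜ {i})
    rw [Finset.sum_singleton] at h
    rw [hNorm, ← h]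
    ring
  calc ∑ i ∈ ({ℓ}ᶜ : Finset (Fin L)), rdag p i
      = ∑ i ∈ ({ℓ}ᶜ : Finset (Fin L)), (hNorm p / ((L : ℝ) - 1) - condEnt p {i}ᶜ {i}) := by
        refine Finset.sum_congr rfl fun i _ => ?_
        rw [h1 i, rstar]
    _ = (({ℓ}ᶜ : Finset (Fin L)).card : ℝ) * (hNorm p / ((L : ℝ) - 1))
          - ∑ i ∈ ({ℓ}ᶜ : Finset (Fin L)), condEnt p {i}ᶜ {i} := by
        rw [Finset.sum_sub_distrib, Finset.sum_const, nsmul_eq_mul]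
    _ = condEnt p {ℓ}ᶜ {ℓ} := by
        rw [hcardc, hsplit]
        field_simp
        ring
end

section
/- Fix a strict subset S ⊂ [1,L] with |S| ≤ L−2 and for each k ∈ [1,L−1] set Γ_k := Σ_{K⊂[1,L], |K|=k} Σ_{i∈S} J_i(K). If the source (W_1,…,W_L) ~ p is balanced, then Γ_k ≥ Σ_{K⊆S, |K|=k} I_K for every k with 1 ≤ k ≤ |S|, and Γ_k ≥ 0 for every k with |S| < k ≤ L−1. -/
open Finset Real

open MWRC Finset

/-! ### Auxiliary combinatorial lemmas -/

/-- `C(s+1,k)*(s+1-k) = (s+1)*C(s,k)` over ℝ, for `1 ≤ k`. -/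
lemma MWRC.choose_id1 (s k : ℕ) (hk : 1 ≤ k) (hks : k ≤ s + 1) :
    (Nat.choose (s+1) k : ℝ) * ((s:ℝ) + 1 - k) = ((s:ℝ) + 1) * (Nat.choose s k : ℝ) := by
  obtain ⟨m, rfl⟩ : ∃ m, k = m + 1 := ⟨k - 1, by omega⟩
  have hms : m ≤ s := by omega
  have h1 := Nat.choose_succ_right_eq (s+1) (m+1)
  have h2 := Nat.add_one_mul_choose_eq s (m+1)
  have h3 : (s + 1) - (m + 1) = s - m := by omega
  rw [h3] at h1
  have h4 : (s+1).choose (m+1) * (s - m) = (s+1) * s.choose (m+1) := by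
    rw [← h1]; exact h2.symm
  have h5 := congrArg (fun x : ℕ => (x : ℝ)) h4
  push_cast [Nat.cast_sub hms] at h5
  push_cast
  linarith [h5]

/-- Step: `(s+1)*C(s,k)*A_s ≤ s*C(s+1,k)*A_{s+1}` where `A_t = 2kn-(k-1)t`. -/
lemma MWRC.combo_step (n s k : ℕ) (hk : 1 ≤ k) (hks : k ≤ s) (hsn : s < n) :
    ((s:ℝ) + 1) * (Nat.choose s k : ℝ) * (2*k*n - ((k:ℝ)-1)*s) ≤
      (s:ℝ) * (Nat.choose (s+1) k : ℝ) * (2*k*n - ((k:ℝ)-1)*((s:ℝ)+1)) := by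
  have hC := MWRC.choose_id1 s k hk (by omega)
  have hCpos : (0:ℝ) ≤ (Nat.choose (s+1) k : ℝ) := by positivity
  have hk1 : (1:ℝ) ≤ (k:ℝ) := by exact_mod_cast hk
  have hsn' : (s:ℝ) ≤ (n:ℝ) := by exact_mod_cast hsn.le
  have hfac : (0:ℝ) ≤ (Nat.choose (s+1) k : ℝ) * ((k:ℝ) * ((k:ℝ)-1) * (2*(n:ℝ) - s)) := by
    refine mul_nonneg hCpos (mul_nonneg (mul_nonneg (by positivity) (by linarith)) (by linarith))
  have h5 : (s:ℝ) * (Nat.choose (s+1) k : ℝ) * (2*k*n - ((k:ℝ)-1)*((s:ℝ)+1))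
      - ((s:ℝ) + 1) * (Nat.choose s k : ℝ) * (2*k*n - ((k:ℝ)-1)*s)
      = (Nat.choose (s+1) k : ℝ) * ((k:ℝ) * ((k:ℝ)-1) * (2*(n:ℝ) - s)) := by
    linear_combination (2*(k:ℝ)*n - ((k:ℝ)-1)*s) * hC
  linarith

lemma MWRC.combo_chain (k : ℕ) (hk : 1 ≤ k) :
    ∀ (j s : ℕ), k ≤ s →
      ((s+j : ℕ) : ℝ) * (Nat.choose s k : ℝ) * (2*k*((s+j : ℕ):ℝ) - ((k:ℝ)-1)*s) ≤
        (s:ℝ) * (Nat.choose (s+j) k : ℝ) * (2*k*((s+j:ℕ):ℝ) - ((k:ℝ)-1)*((s+j:ℕ):ℝ)) := by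
  intro j
  induction j with
  | zero => intro s hs; simp
  | succ j ih =>
    intro s hs
    have hstep := MWRC.combo_step (s+(j+1)) s k hk hs (by omega)
    have hih := ih (s+1) (by omega)
    have hrw : s + 1 + j = s + (j+1) := by omega
    rw [hrw] at hih
    set n : ℕ := s + (j+1) with hn
    push_cast at hih
    have h1 := mul_le_mul_of_nonneg_left hstep (show (0:ℝ) ≤ (n:ℝ) by positivity)
    have h2 := mul_le_mul_of_nonneg_left hih (show (0:ℝ) ≤ (s:ℝ) by positivity)
    have h3 : ((s:ℝ)+1) * ((n:ℝ) * (Nat.choose s k : ℝ) * (2*k*(n:ℝ) - ((k:ℝ)-1)*s)) ≤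
        ((s:ℝ)+1) * ((s:ℝ) * (Nat.choose n k : ℝ) * (2*k*(n:ℝ) - ((k:ℝ)-1)*(n:ℝ))) := by
      nlinarith [h1, h2]
    exact le_of_mul_le_mul_left h3 (by positivity)

/-- Key binomial inequality: for `1 ≤ k`, `s ≤ n`,
`C(s,k)*(2kn-(k-1)s) ≤ s*(k+1)*C(n,k)`. -/
lemma MWRC.combo (n s k : ℕ) (hk : 1 ≤ k) (hsn : s ≤ n) :
    (Nat.choose s k : ℝ) * (2*(k:ℝ)*n - ((k:ℝ)-1)*s) ≤ (s:ℝ) * ((k:ℝ)+1) * (Nat.choose n k : ℝ) := by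
  rcases lt_or_ge s k with h | h
  · rw [Nat.choose_eq_zero_of_lt h]
    simp only [Nat.cast_zero, zero_mul]
    positivity
  · obtain ⟨j, rfl⟩ : ∃ j, n = s + j := ⟨n - s, by omega⟩
    have hch := MWRC.combo_chain k hk j s h
    have hnpos : (0:ℝ) < ((s+j:ℕ):ℝ) := by
      have : 0 < s + j := by omega
      exact_mod_cast this
    have h3 : ((s+j:ℕ):ℝ) * ((Nat.choose s k : ℝ) * (2*(k:ℝ)*((s+j:ℕ):ℝ) - ((k:ℝ)-1)*s)) ≤
        ((s+j:ℕ):ℝ) * ((s:ℝ) * ((k:ℝ)+1) * (Nat.choose (s+j) k : ℝ)) := by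
      nlinarith [hch]
    have h4 := le_of_mul_le_mul_left h3 hnpos
    exact_mod_cast h4

/-- Pure-real bracket positivity lemma. The variables `Cs Cs' Cl Cl' c1 Cn` stand for
binomial coefficients satisfying the listed identities. -/
lemma MWRC.bracket_nonneg (Lr kr sr Cs Cs' Cl Cl' c1 Cn : ℝ)
    (hk2 : 2 ≤ kr) (hkL : kr ≤ Lr - 1) (hsL : sr ≤ Lr - 2) (hs1 : 1 ≤ sr)
    (i1 : (Lr - kr) * c1 = kr * Cl')
    (i3 : sr * Cs' = (sr - kr) * Cs)
    (i4 : (Lr - 1 - kr) * Cl' = (Lr - 1) * Cn)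
    (i6 : Cl = c1 + Cl')
    (i5 : Cs * (2*kr*(Lr - 2) - (kr - 1)*sr) ≤ sr * (kr + 1) * Cn) :
    0 ≤ Cs * ((kr * ((Lr - kr)/(Lr - 1)) + (sr - kr) * ((1 - kr)/(Lr - 1))) - 1)
      + sr * (((Lr - kr)/(Lr - 1)) * ((Cl - Cl') - (Cs - Cs'))
        + ((1 - kr)/(Lr - 1)) * (1 + (1/kr) * ((Lr - 1)/(2*Lr - kr - 3))) * (Cl' - Cs')) := by
  have hL3 : 3 ≤ Lr := by linarith
  have hd : (0:ℝ) < Lr - 1 := by linarith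
  have he : (0:ℝ) < 2*Lr - kr - 3 := by linarith
  have hkpos : (0:ℝ) < kr := by linarith
  have hLk : (0:ℝ) < Lr - kr := by linarith
  have hspos : (0:ℝ) < sr := by linarith
  have hc1 : c1 = kr * Cl' / (Lr - kr) := by field_simp; linarith [i1]
  have hCs' : Cs' = (sr - kr) * Cs / sr := by field_simp; linarith [i3]
  have hCn : Cn = (Lr - 1 - kr) * Cl' / (Lr - 1) := by field_simp; linarith [i4]
  rw [i6, hc1, hCs']
  have key : Cs * ((kr * ((Lr - kr)/(Lr - 1)) + (sr - kr) * ((1 - kr)/(Lr - 1))) - 1)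
      + sr * (((Lr - kr)/(Lr - 1)) * ((kr * Cl' / (Lr - kr) + Cl' - Cl') - (Cs - (sr - kr) * Cs / sr))
        + ((1 - kr)/(Lr - 1)) * (1 + (1/kr) * ((Lr - 1)/(2*Lr - kr - 3))) * (Cl' - (sr - kr) * Cs / sr))
      = ((kr + 1) * sr * (Lr - 1 - kr) * Cl' - (Lr - 1) * Cs * (2*kr*(Lr-2) - (kr-1)*sr))
        / ((Lr - 1) * ((Lr - 1) * kr * (2*Lr - kr - 3))) * (Lr - 1) := by
    obtain ⟨E, hE⟩ : ∃ E : ℝ, E = 2*Lr - kr - 3 := ⟨_, rfl⟩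
    have hE0 : E ≠ 0 := by rw [hE]; exact he.ne'
    rw [← hE]
    field_simp
    rw [hE]
    ring
  rw [key]
  have hnum : 0 ≤ (kr + 1) * sr * (Lr - 1 - kr) * Cl' - (Lr - 1) * Cs * (2*kr*(Lr-2) - (kr-1)*sr) := by
    rw [hCn] at i5
    have h2 : Cs * (2*kr*(Lr - 2) - (kr - 1)*sr) * (Lr - 1) ≤
        sr * (kr + 1) * ((Lr - 1 - kr) * Cl' / (Lr - 1)) * (Lr - 1) :=
      mul_le_mul_of_nonneg_right i5 hd.le
    have h3 : sr * (kr + 1) * ((Lr - 1 - kr) * Cl' / (Lr - 1)) * (Lr - 1)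
        = (kr + 1) * sr * (Lr - 1 - kr) * Cl' := by field_simp
    nlinarith [h2, h3]
  positivity

lemma MWRC.filter_not_mem_powersetCard {α : Type*} [DecidableEq α] (u : Finset α) (k : ℕ) (i : α) :
    (u.powersetCard k).filter (fun K => i ∉ K) = (u.erase i).powersetCard k := by
  ext K
  simp only [Finset.mem_filter, Finset.mem_powersetCard, Finset.subset_erase]
  tauto

lemma MWRC.filter_subset_powersetCard {α : Type*} [DecidableEq α] (u v : Finset α) (k : ℕ) :
    (u.powersetCard k).filter (fun K => K ⊆ v) = (u ∩ v).powersetCard k := by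
  ext K
  simp only [Finset.mem_filter, Finset.mem_powersetCard, Finset.subset_inter_iff]
  tauto

set_option maxHeartbeats 2000000 in
/-- The main inequality: for `1 ≤ k ≤ L-1`,
`Σ_{K ⊆ S, |K|=k} I_K ≤ Σ_{|K|=k} Σ_{i∈S} J_i(K)`. -/
lemma MWRC.main_ineq {L : ℕ} (hL : 2 ≤ L) {W : Fin L → Type*} [∀ i, Fintype (W i)]
    [∀ i, DecidableEq (W i)] (p : (∀ i, W i) → ℝ)
    (hbal : Balanced p) (S : Finset (Fin L)) (hScard : S.card ≤ L - 2)
    (k : ℕ) (hk1 : 1 ≤ k) (hkL : k ≤ L - 1) :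
    ∑ K ∈ Finset.powersetCard k S, multiInfo p K ≤
      ∑ K ∈ Finset.powersetCard k (univ : Finset (Fin L)), ∑ i ∈ S, J p i K := by
  set P := Finset.powersetCard k (univ : Finset (Fin L)) with hPdef
  set Q := Finset.powersetCard k S with hQdef
  have hd0 : ((L:ℝ) - 1) ≠ 0 := by
    have : (2:ℝ) ≤ (L:ℝ) := by exact_mod_cast hL
    linarith
  rcases eq_or_lt_of_le hk1 with hk1' | hk2
  · -- case k = 1 : equality
    subst hk1'
    have hsum : ∀ K ∈ P, (∑ i ∈ S, J p i K) = if K ⊆ S then multiInfo p K else 0 := by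
      intro K hK
      rw [hPdef] at hK
      obtain ⟨hKu, hKc⟩ := Finset.mem_powersetCard.mp hK
      have hJ : ∀ i ∈ S, J p i K = if i ∈ K then multiInfo p K else 0 := by
        intro i _
        by_cases h : i ∈ K
        · rw [if_pos h, J, if_pos h, hKc]
          norm_num
          rw [div_self hd0, one_mul]
        · rw [if_neg h, J, if_neg h, hKc]
          norm_num
      rw [Finset.sum_congr rfl hJ, Finset.sum_ite_mem]
      obtain ⟨j, rfl⟩ := Finset.card_eq_one.mp hKc
      by_cases hj : j ∈ S
      · rw [if_pos (Finset.singleton_subset_iff.mpr hj),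
          Finset.inter_singleton_of_mem hj, Finset.sum_singleton]
      · rw [if_neg (fun hsub => hj (Finset.singleton_subset_iff.mp hsub)),
          Finset.inter_singleton_of_notMem hj, Finset.sum_empty]
    rw [Finset.sum_congr rfl hsum, ← Finset.sum_filter, hPdef,
      MWRC.filter_subset_powersetCard, Finset.univ_inter, hQdef]
  · -- case 2 ≤ k
    have h2k : 2 ≤ k := hk2
    have hL3 : 3 ≤ L := by omega
    rcases Finset.eq_empty_or_nonempty S with hSe | hSne
    · have hQe : Q = ∅ := by
        rw [hQdef, Finset.powersetCard_eq_empty.mpr]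
        rw [hSe]
        simp only [Finset.card_empty]
        omega
      rw [hQe, Finset.sum_empty, hSe]
      simp
    have hs1 : 1 ≤ S.card := Finset.card_pos.mpr hSne
    -- numeric casts
    have hkr2 : (2:ℝ) ≤ (k:ℝ) := by exact_mod_cast h2k
    have hLr3 : (3:ℝ) ≤ (L:ℝ) := by exact_mod_cast hL3
    have hkrL : (k:ℝ) ≤ (L:ℝ) - 1 := by
      have h' : k + 1 ≤ L := by omega
      have h'' : ((k+1:ℕ):ℝ) ≤ (L:ℝ) := by exact_mod_cast h'
      push_cast at h''
      linarith
    have hsrL : ((S.card:ℕ):ℝ) ≤ (L:ℝ) - 2 := by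
      have h' : S.card + 2 ≤ L := by omega
      have h'' : ((S.card+2:ℕ):ℝ) ≤ (L:ℝ) := by exact_mod_cast h'
      push_cast at h''
      linarith
    -- mu facts
    have hsetfin : ({x : ℝ | ∃ T : Finset (Fin L), T.card = k ∧ multiInfo p T = x}).Finite := by
      have heq : {x : ℝ | ∃ T : Finset (Fin L), T.card = k ∧ multiInfo p T = x}
          = (fun T : Finset (Fin L) => multiInfo p T) '' {T : Finset (Fin L) | T.card = k} := by
        ext x
        constructor
        · rintro ⟨T, h1, h2⟩; exact ⟨T, h1, h2⟩
        · rintro ⟨T, h1, h2⟩; exact ⟨T, h1, h2⟩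
      rw [heq]
      exact Set.Finite.image _ (Set.toFinite _)
    have hlow : ∀ T : Finset (Fin L), T.card = k → muMin p k ≤ multiInfo p T := by
      intro T hT
      exact csInf_le hsetfin.bddBelow ⟨T, hT, rfl⟩
    have hup : ∀ T : Finset (Fin L), T.card = k → multiInfo p T ≤ muMax p k := by
      intro T hT
      exact le_csSup hsetfin.bddAbove ⟨T, hT, rfl⟩
    have hbal' : muMax p k ≤ gap L k * muMin p k := hbal k (Finset.mem_Icc.mpr ⟨h2k, hkL⟩)
    have hgapval : gap L k = 1 + (1/(k:ℝ)) * (((L:ℝ)-1)/(2*(L:ℝ)-(k:ℝ)-3)) := rfl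
    have hgap : (1:ℝ) < gap L k := by
      have he : (0:ℝ) < 2*(L:ℝ)-(k:ℝ)-3 := by linarith
      have hdp : (0:ℝ) < (L:ℝ)-1 := by linarith
      have h2 : 0 < (1/(k:ℝ)) * (((L:ℝ)-1)/(2*(L:ℝ)-(k:ℝ)-3)) :=
        mul_pos (by positivity) (div_pos hdp he)
      rw [hgapval]
      linarith
    have hμM : muMin p k ≤ muMax p k := by
      obtain ⟨T, hTs, hTc⟩ := Finset.exists_subset_card_eq
        (show k ≤ (univ : Finset (Fin L)).card by rw [Finset.card_univ, Fintype.card_fin]; omega)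
      exact le_trans (hlow T hTc) (hup T hTc)
    have hμ0 : 0 ≤ muMin p k := by nlinarith [hμM, hbal', hgap]
    -- structural lemmas
    have hQS : P.filter (fun K => K ⊆ S) = Q := by
      rw [hPdef, MWRC.filter_subset_powersetCard, Finset.univ_inter, hQdef]
    have hPQ1 : ∀ i : Fin L, (P.filter (fun K => i ∈ K)).filter (fun K => K ⊆ S)
        = Q.filter (fun K => i ∈ K) := by
      intro i; rw [Finset.filter_comm, hQS]
    have hPQ2 : ∀ i : Fin L, (P.filter (fun K => i ∉ K)).filter (fun K => K ⊆ S)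
        = Q.filter (fun K => i ∉ K) := by
      intro i; rw [Finset.filter_comm, hQS]
    have hPnot : ∀ i : Fin L, P.filter (fun K => i ∉ K) = (Finset.univ.erase i).powersetCard k := by
      intro i; rw [hPdef]; exact MWRC.filter_not_mem_powersetCard _ _ _
    have hQnot : ∀ i : Fin L, Q.filter (fun K => i ∉ K) = (S.erase i).powersetCard k := by
      intro i; rw [hQdef]; exact MWRC.filter_not_mem_powersetCard _ _ _
    have hPcard : P.card = L.choose k := by
      rw [hPdef, Finset.card_powersetCard, Finset.card_univ, Fintype.card_fin]
    have hQcard : Q.card = S.card.choose k := by rw [hQdef, Finset.card_powersetCard]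
    have hPnotcard : ∀ i : Fin L, (P.filter (fun K => i ∉ K)).card = (L-1).choose k := by
      intro i
      rw [hPnot i, Finset.card_powersetCard, Finset.card_erase_of_mem (Finset.mem_univ i),
        Finset.card_univ, Fintype.card_fin]
    have hQnotcard : ∀ i ∈ S, (Q.filter (fun K => i ∉ K)).card = (S.card-1).choose k := by
      intro i hi
      rw [hQnot i, Finset.card_powersetCard, Finset.card_erase_of_mem hi]
    have hcard1 : ∀ i ∈ S, ((((P.filter (fun K => i ∈ K)).filter (fun K => ¬ K ⊆ S)).card : ℝ))
        = ((L.choose k : ℝ) - ((L-1).choose k : ℝ))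
          - ((S.card.choose k : ℝ) - ((S.card-1).choose k : ℝ)) := by
      intro i hi
      have hA := Finset.card_filter_add_card_filter_not (s := P) (p := fun K => i ∈ K)
      have hB := Finset.card_filter_add_card_filter_not (s := Q) (p := fun K => i ∈ K)
      have hC := Finset.card_filter_add_card_filter_not
        (s := P.filter (fun K => i ∈ K)) (p := fun K => K ⊆ S)
      rw [hPQ1 i] at hC
      rw [hPnotcard i, hPcard] at hA
      rw [hQnotcard i hi, hQcard] at hB
      have hA' : ((P.filter (fun K => i ∈ K)).card : ℝ) + ((L-1).choose k : ℝ)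
          = (L.choose k : ℝ) := by exact_mod_cast hA
      have hB' : ((Q.filter (fun K => i ∈ K)).card : ℝ) + ((S.card-1).choose k : ℝ)
          = (S.card.choose k : ℝ) := by exact_mod_cast hB
      have hC' : ((Q.filter (fun K => i ∈ K)).card : ℝ)
          + (((P.filter (fun K => i ∈ K)).filter (fun K => ¬ K ⊆ S)).card : ℝ)
          = ((P.filter (fun K => i ∈ K)).card : ℝ) := by exact_mod_cast hC
      linarith
    have hcard2 : ∀ i ∈ S, ((((P.filter (fun K => i ∉ K)).filter (fun K => ¬ K ⊆ S)).card : ℝ))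
        = (((L-1).choose k : ℝ) - ((S.card-1).choose k : ℝ)) := by
      intro i hi
      have hC2 := Finset.card_filter_add_card_filter_not
        (s := P.filter (fun K => i ∉ K)) (p := fun K => K ⊆ S)
      rw [hPQ2 i, hQnotcard i hi, hPnotcard i] at hC2
      have hC2' : ((S.card-1).choose k : ℝ)
          + (((P.filter (fun K => i ∉ K)).filter (fun K => ¬ K ⊆ S)).card : ℝ)
          = ((L-1).choose k : ℝ) := by exact_mod_cast hC2
      linarith
    have ha0 : 0 ≤ ((L:ℝ) - (k:ℝ)) / ((L:ℝ) - 1) := div_nonneg (by linarith) (by linarith)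
    have hb0 : (1 - (k:ℝ)) / ((L:ℝ) - 1) ≤ 0 :=
      div_nonpos_iff.mpr (Or.inr ⟨by linarith, by linarith⟩)
    -- per-element inequality
    have perI : ∀ i ∈ S,
        (((L:ℝ)-(k:ℝ))/((L:ℝ)-1)) * (∑ K ∈ Q.filter (fun K => i ∈ K), multiInfo p K)
        + ((1-(k:ℝ))/((L:ℝ)-1)) * (∑ K ∈ Q.filter (fun K => i ∉ K), multiInfo p K)
        + ((((L:ℝ)-(k:ℝ))/((L:ℝ)-1)) * ((((L.choose k:ℝ) - ((L-1).choose k:ℝ))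
              - ((S.card.choose k:ℝ) - ((S.card-1).choose k:ℝ))) * muMin p k)
          + ((1-(k:ℝ))/((L:ℝ)-1)) * (((((L-1).choose k:ℝ) - ((S.card-1).choose k:ℝ)))
              * (gap L k * muMin p k)))
        ≤ ∑ K ∈ P, J p i K := by
      intro i hi
      have hmc : ∀ K ∈ P, K.card = k := by
        intro K hK; rw [hPdef] at hK; exact (Finset.mem_powersetCard.mp hK).2
      have hJ1 : ∑ K ∈ P, J p i K
          = (((L:ℝ)-(k:ℝ))/((L:ℝ)-1)) * (∑ K ∈ P.filter (fun K => i ∈ K), multiInfo p K)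
            + ((1-(k:ℝ))/((L:ℝ)-1)) * (∑ K ∈ P.filter (fun K => i ∉ K), multiInfo p K) := by
        rw [Finset.mul_sum, Finset.mul_sum,
          ← Finset.sum_filter_add_sum_filter_not P (fun K => i ∈ K) (fun K => J p i K)]
        congr 1
        · refine Finset.sum_congr rfl fun K hK => ?_
          have hKP : K ∈ P := Finset.mem_of_mem_filter K hK
          have hiK : i ∈ K := (Finset.mem_filter.mp hK).2
          rw [J, if_pos hiK, hmc K hKP]
        · refine Finset.sum_congr rfl fun K hK => ?_
          have hKP : K ∈ P := Finset.mem_of_mem_filter K hK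
          have hiK : ¬ i ∈ K := (Finset.mem_filter.mp hK).2
          rw [J, if_neg hiK, hmc K hKP]
      have hsplitA : ∑ K ∈ P.filter (fun K => i ∈ K), multiInfo p K
          = ∑ K ∈ Q.filter (fun K => i ∈ K), multiInfo p K
            + ∑ K ∈ (P.filter (fun K => i ∈ K)).filter (fun K => ¬ K ⊆ S), multiInfo p K := by
        rw [← Finset.sum_filter_add_sum_filter_not (P.filter (fun K => i ∈ K))
          (fun K => K ⊆ S) (fun K => multiInfo p K), hPQ1 i]
      have hsplitB : ∑ K ∈ P.filter (fun K => i ∉ K), multiInfo p K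
          = ∑ K ∈ Q.filter (fun K => i ∉ K), multiInfo p K
            + ∑ K ∈ (P.filter (fun K => i ∉ K)).filter (fun K => ¬ K ⊆ S), multiInfo p K := by
        rw [← Finset.sum_filter_add_sum_filter_not (P.filter (fun K => i ∉ K))
          (fun K => K ⊆ S) (fun K => multiInfo p K), hPQ2 i]
      have hrest1 : ((((P.filter (fun K => i ∈ K)).filter (fun K => ¬ K ⊆ S)).card : ℝ)) * muMin p k
          ≤ ∑ K ∈ (P.filter (fun K => i ∈ K)).filter (fun K => ¬ K ⊆ S), multiInfo p K := by
        have h := Finset.card_nsmul_le_sum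
          ((P.filter (fun K => i ∈ K)).filter (fun K => ¬ K ⊆ S))
          (fun K => multiInfo p K) (muMin p k)
          (fun K hK => hlow K (hmc K (Finset.mem_of_mem_filter K (Finset.mem_of_mem_filter K hK))))
        simpa [nsmul_eq_mul] using h
      have hrest2 : ∑ K ∈ (P.filter (fun K => i ∉ K)).filter (fun K => ¬ K ⊆ S), multiInfo p K
          ≤ ((((P.filter (fun K => i ∉ K)).filter (fun K => ¬ K ⊆ S)).card : ℝ)) * muMax p k := by
        have h := Finset.sum_le_card_nsmul
          ((P.filter (fun K => i ∉ K)).filter (fun K => ¬ K ⊆ S))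
          (fun K => multiInfo p K) (muMax p k)
          (fun K hK => hup K (hmc K (Finset.mem_of_mem_filter K (Finset.mem_of_mem_filter K hK))))
        simpa [nsmul_eq_mul] using h
      have hrest2' : ∑ K ∈ (P.filter (fun K => i ∉ K)).filter (fun K => ¬ K ⊆ S), multiInfo p K
          ≤ ((((P.filter (fun K => i ∉ K)).filter (fun K => ¬ K ⊆ S)).card : ℝ))
            * (gap L k * muMin p k) :=
        le_trans hrest2 (mul_le_mul_of_nonneg_left hbal' (Nat.cast_nonneg _))
      rw [hJ1, hsplitA, hsplitB, ← hcard1 i hi, ← hcard2 i hi]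
      have k1 := mul_le_mul_of_nonneg_left hrest1 ha0
      have k2 := mul_le_mul_of_nonpos_left hrest2' hb0
      nlinarith [k1, k2]
    -- sum the per-element inequality over i ∈ S
    have hsum1 := Finset.sum_le_sum perI
    rw [Finset.sum_add_distrib, Finset.sum_const, nsmul_eq_mul] at hsum1
    -- swap the order of summation on the Q-part
    have hswap : ∑ i ∈ S, ((((L:ℝ)-(k:ℝ))/((L:ℝ)-1)) * (∑ K ∈ Q.filter (fun K => i ∈ K), multiInfo p K)
        + ((1-(k:ℝ))/((L:ℝ)-1)) * (∑ K ∈ Q.filter (fun K => i ∉ K), multiInfo p K))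
        = ∑ K ∈ Q, ((k:ℝ) * (((L:ℝ)-(k:ℝ))/((L:ℝ)-1))
            + ((S.card:ℝ)-(k:ℝ)) * ((1-(k:ℝ))/((L:ℝ)-1))) * multiInfo p K := by
      have h1 : ∀ i : Fin L,
          (((L:ℝ)-(k:ℝ))/((L:ℝ)-1)) * (∑ K ∈ Q.filter (fun K => i ∈ K), multiInfo p K)
          + ((1-(k:ℝ))/((L:ℝ)-1)) * (∑ K ∈ Q.filter (fun K => i ∉ K), multiInfo p K)
          = ∑ K ∈ Q, (if i ∈ K then (((L:ℝ)-(k:ℝ))/((L:ℝ)-1)) * multiInfo p K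
              else ((1-(k:ℝ))/((L:ℝ)-1)) * multiInfo p K) := by
        intro i
        rw [Finset.sum_filter, Finset.sum_filter, Finset.mul_sum, Finset.mul_sum,
          ← Finset.sum_add_distrib]
        refine Finset.sum_congr rfl fun K _ => ?_
        by_cases h : i ∈ K <;> simp [h]
      rw [Finset.sum_congr rfl fun i _ => h1 i, Finset.sum_comm]
      refine Finset.sum_congr rfl fun K hK => ?_
      have hKS : K ⊆ S := by rw [hQdef] at hK; exact (Finset.mem_powersetCard.mp hK).1
      have hKc : K.card = k := by rw [hQdef] at hK; exact (Finset.mem_powersetCard.mp hK).2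
      have hks' : k ≤ S.card := hKc ▸ Finset.card_le_card hKS
      rw [Finset.sum_ite, Finset.sum_const, Finset.sum_const]
      have hf1 : S.filter (fun i => i ∈ K) = K := by
        rw [Finset.filter_mem_eq_inter]
        exact Finset.inter_eq_right.mpr hKS
      have hf2 : S.filter (fun i => ¬ i ∈ K) = S \ K := by
        rw [Finset.filter_not, hf1]
      rw [hf1, hf2, Finset.card_sdiff_of_subset hKS, hKc, nsmul_eq_mul, nsmul_eq_mul]
      push_cast [Nat.cast_sub hks']
      ring
    -- per-K lower bound on the swapped sum
    have hcc : 0 ≤ ((k:ℝ) * (((L:ℝ)-(k:ℝ))/((L:ℝ)-1))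
        + ((S.card:ℝ)-(k:ℝ)) * ((1-(k:ℝ))/((L:ℝ)-1))) - 1 := by
      have key : ((k:ℝ) * (((L:ℝ)-(k:ℝ))/((L:ℝ)-1))
          + ((S.card:ℝ)-(k:ℝ)) * ((1-(k:ℝ))/((L:ℝ)-1))) - 1
          = (((k:ℝ)-1) * (((L:ℝ)-1) - (S.card:ℝ))) / ((L:ℝ)-1) := by
        field_simp
        ring
      rw [key]
      apply div_nonneg
      · nlinarith [hkr2, hsrL, hLr3]
      · linarith
    have hlb : ∑ K ∈ Q, (multiInfo p K
          + (((k:ℝ) * (((L:ℝ)-(k:ℝ))/((L:ℝ)-1))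
            + ((S.card:ℝ)-(k:ℝ)) * ((1-(k:ℝ))/((L:ℝ)-1))) - 1) * muMin p k)
        ≤ ∑ K ∈ Q, ((k:ℝ) * (((L:ℝ)-(k:ℝ))/((L:ℝ)-1))
            + ((S.card:ℝ)-(k:ℝ)) * ((1-(k:ℝ))/((L:ℝ)-1))) * multiInfo p K := by
      refine Finset.sum_le_sum fun K hK => ?_
      have hKc : K.card = k := by rw [hQdef] at hK; exact (Finset.mem_powersetCard.mp hK).2
      have h1 := hlow K hKc
      nlinarith [mul_le_mul_of_nonneg_left h1 hcc]
    have hlbsum : ∑ K ∈ Q, (multiInfo p K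
          + (((k:ℝ) * (((L:ℝ)-(k:ℝ))/((L:ℝ)-1))
            + ((S.card:ℝ)-(k:ℝ)) * ((1-(k:ℝ))/((L:ℝ)-1))) - 1) * muMin p k)
        = (∑ K ∈ Q, multiInfo p K)
          + (S.card.choose k : ℝ) * ((((k:ℝ) * (((L:ℝ)-(k:ℝ))/((L:ℝ)-1))
            + ((S.card:ℝ)-(k:ℝ)) * ((1-(k:ℝ))/((L:ℝ)-1))) - 1) * muMin p k) := by
      rw [Finset.sum_add_distrib, Finset.sum_const, nsmul_eq_mul, hQcard]
    -- binomial identities, cast to ℝ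
    have i1 : ((L:ℝ) - (k:ℝ)) * (((L-1).choose (k-1) : ℕ) : ℝ)
        = (k:ℝ) * (((L-1).choose k : ℕ) : ℝ) := by
      have h1 := Nat.choose_succ_right_eq (L-1) (k-1)
      rw [show k-1+1 = k by omega, show (L-1) - (k-1) = L - k by omega] at h1
      have h2 := congrArg (fun x : ℕ => (x:ℝ)) h1
      push_cast [Nat.cast_sub (show k ≤ L by omega)] at h2
      linarith
    have i3 : ((S.card:ℕ):ℝ) * (((S.card-1).choose k : ℕ) : ℝ)
        = ((S.card:ℝ) - (k:ℝ)) * ((S.card.choose k : ℕ) : ℝ) := by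
      have hp : S.card.choose k = (S.card-1).choose (k-1) + (S.card-1).choose k := by
        have h := Nat.choose_succ_succ' (S.card-1) (k-1)
        rw [show S.card-1+1 = S.card by omega, show k-1+1 = k by omega] at h
        exact h
      have h2 := Nat.add_one_mul_choose_eq (S.card-1) (k-1)
      rw [show S.card-1+1 = S.card by omega,
        show k-1+1 = k by omega] at h2
      have h2' := congrArg (fun x : ℕ => (x:ℝ)) h2
      have hp' := congrArg (fun x : ℕ => (x:ℝ)) hp
      push_cast at h2' hp'
      linear_combination (-((S.card:ℕ):ℝ)) * hp' - h2'
    have i4 : ((L:ℝ) - 1 - (k:ℝ)) * (((L-1).choose k : ℕ) : ℝ)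
        = ((L:ℝ)-1) * (((L-2).choose k : ℕ) : ℝ) := by
      have h1 := Nat.choose_succ_right_eq (L-1) k
      have h2 := Nat.add_one_mul_choose_eq (L-2) k
      rw [show L-2+1 = L-1 by omega] at h2
      have e : (L-1).choose k * ((L-1) - k) = (L-1) * (L-2).choose k := by
        rw [← h1]; exact h2.symm
      have e' := congrArg (fun x : ℕ => (x:ℝ)) e
      push_cast [Nat.cast_sub (show k ≤ L-1 from hkL), Nat.cast_sub (show 1 ≤ L by omega)] at e'
      linarith
    have i6 : ((L.choose k : ℕ) : ℝ)
        = (((L-1).choose (k-1) : ℕ) : ℝ) + (((L-1).choose k : ℕ) : ℝ) := by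
      have h := Nat.choose_succ_succ' (L-1) (k-1)
      rw [show L-1+1 = L by omega, show k-1+1 = k by omega] at h
      exact_mod_cast h
    have i5 : ((S.card.choose k : ℕ) : ℝ) * (2*(k:ℝ)*((L:ℝ)-2) - ((k:ℝ)-1)*(S.card:ℝ))
        ≤ (S.card:ℝ)*((k:ℝ)+1)*(((L-2).choose k : ℕ) : ℝ) := by
      have h := MWRC.combo (L-2) S.card k (by omega) hScard
      have hc : (((L-2:ℕ)) : ℝ) = (L:ℝ) - 2 := by
        push_cast [Nat.cast_sub (show 2 ≤ L from hL)]
        ring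
      rw [hc] at h
      exact h
    have hBr := MWRC.bracket_nonneg (L:ℝ) (k:ℝ) (S.card:ℝ) ((S.card.choose k : ℕ) : ℝ)
      (((S.card-1).choose k : ℕ) : ℝ) ((L.choose k : ℕ) : ℝ) (((L-1).choose k : ℕ) : ℝ)
      (((L-1).choose (k-1) : ℕ) : ℝ) (((L-2).choose k : ℕ) : ℝ)
      hkr2 hkrL hsrL (by exact_mod_cast hs1) i1 i3 i4 i6 i5
    rw [← hgapval] at hBr
    have hμBr := mul_nonneg hμ0 hBr
    have hcomm : ∑ K ∈ P, ∑ i ∈ S, J p i K = ∑ i ∈ S, ∑ K ∈ P, J p i K := Finset.sum_comm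
    rw [hswap] at hsum1
    rw [hcomm]
    -- conclude
    nlinarith [hsum1, hlb, hlbsum, hμBr]

/-- Fix a strict subset `S ⊂ [1,L]` with `|S| ≤ L−2` and set
`Γ_k := Σ_{K ⊂ [1,L], |K| = k} Σ_{i ∈ S} J_i(K)`. If the source is balanced then
`Γ_k ≥ Σ_{K ⊆ S, |K| = k} I_K` for `1 ≤ k ≤ |S|`, and `Γ_k ≥ 0` for `|S| < k ≤ L−1`. -/
theorem stmt12 {L : ℕ} (hL : 2 ≤ L) {W : Fin L → Type*} [∀ i, Fintype (W i)]
    [∀ i, DecidableEq (W i)] (p : (∀ i, W i) → ℝ) (hp : IsPMF p)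
    (hbal : Balanced p) (S : Finset (Fin L)) (hS : S ⊂ Finset.univ)
    (hScard : S.card ≤ L - 2) :
    (∀ k : ℕ, 1 ≤ k → k ≤ S.card →
        ∑ K ∈ S.powerset.filter (fun K => K.card = k), multiInfo p K ≤
          ∑ K ∈ Finset.univ.powerset.filter
              (fun K : Finset (Fin L) => K.card = k ∧ K ≠ Finset.univ),
            ∑ i ∈ S, J p i K) ∧
      (∀ k : ℕ, S.card < k → k ≤ L - 1 →
        0 ≤ ∑ K ∈ Finset.univ.powerset.filter
              (fun K : Finset (Fin L) => K.card = k ∧ K ≠ Finset.univ),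
            ∑ i ∈ S, J p i K) := by
  have hPfilt : ∀ k : ℕ, k ≤ L - 1 →
      Finset.univ.powerset.filter (fun K : Finset (Fin L) => K.card = k ∧ K ≠ Finset.univ)
        = Finset.powersetCard k (univ : Finset (Fin L)) := by
    intro k hk
    ext K
    simp only [Finset.mem_filter, Finset.mem_powerset, Finset.mem_powersetCard]
    constructor
    · rintro ⟨h1, h2, _⟩; exact ⟨h1, h2⟩
    · rintro ⟨h1, h2⟩
      refine ⟨h1, h2, fun hKuniv => ?_⟩
      rw [hKuniv, Finset.card_univ, Fintype.card_fin] at h2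
      omega
  constructor
  · intro k hk1 hks
    have hkL : k ≤ L - 1 := by omega
    have h := MWRC.main_ineq hL p hbal S hScard k hk1 hkL
    rw [hPfilt k hkL, ← Finset.powersetCard_eq_filter]
    exact h
  · intro k hks hkL
    have h := MWRC.main_ineq hL p hbal S hScard k (by omega) hkL
    rw [hPfilt k hkL]
    have h0 : ∑ K ∈ Finset.powersetCard k S, multiInfo p K = 0 := by
      rw [Finset.powersetCard_eq_empty.mpr (by omega)]
      simp
    linarith [h, h0]
end

section
/- Suppose the source (W_1,…,W_L) ~ p is balanced, let k be an integer with 2 ≤ k ≤ L−2, and let T ⊂ [1,L] be a subset with k ≤ |T| ≤ L−2. Then μ̄_k ≤ (1 + β(k,T)/((k−1)·α(k,T)))·μ̲_k, where α(k,T) := |T|·C(L−1,k) − (|T|−k)·C(|T|,k) and β(k,T) := |T|·C(L−1,k) − (L−1)·C(|T|,k), and C(n,k) denotes the binomial coefficient. -/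
open Finset Real

namespace MWRC

variable {L : ℕ} {W : Fin L → Type*} [∀ i, Fintype (W i)] [∀ i, DecidableEq (W i)]

lemma cast_choose_succ (m k : ℕ) (hk : k ≤ m + 1) :
    (m.choose k : ℝ) * ((m : ℝ) + 1) = ((m + 1).choose k : ℝ) * ((m : ℝ) + 1 - (k : ℝ)) := by
  have hc := Nat.choose_mul_succ_eq m k
  have := congrArg (fun x : ℕ => (x : ℝ)) hc
  push_cast [Nat.cast_sub hk] at this
  linarith [this]

/-- Key combinatorial inequality: for `2 ≤ k ≤ m ≤ n − 1`,
`n·C(m,k)·(k(2n−k−1) − (k−1)(m−k)) ≤ m·C(n,k)·(k(n−k−1)+n)`. -/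
lemma key_ineq (k n : ℕ) (hk : 2 ≤ k) :
    ∀ d m : ℕ, k ≤ m → m + d + 1 = n →
    (n : ℝ) * (m.choose k : ℝ) *
        ((k : ℝ) * (2 * (n : ℝ) - (k : ℝ) - 1) - ((k : ℝ) - 1) * ((m : ℝ) - (k : ℝ)))
      ≤ (m : ℝ) * (n.choose k : ℝ) * ((k : ℝ) * ((n : ℝ) - (k : ℝ) - 1) + (n : ℝ)) := by
  intro d
  induction d with
  | zero =>
    intro m hm hn
    have hn' : n = m + 1 := by omega
    subst hn'
    have hc' := cast_choose_succ m k (by omega)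
    apply le_of_eq
    push_cast
    linear_combination ((k : ℝ) * (2 * ((m : ℝ) + 1) - (k : ℝ) - 1)
      - ((k : ℝ) - 1) * ((m : ℝ) - (k : ℝ))) * hc'
  | succ d ih =>
    intro m hm hn
    have ih' := ih (m + 1) (by omega) (by omega)
    push_cast at ih'
    have hc' := cast_choose_succ m k (by omega)
    have hk' : (2 : ℝ) ≤ (k : ℝ) := by exact_mod_cast hk
    have hm' : (k : ℝ) ≤ (m : ℝ) := by exact_mod_cast hm
    have hmn : (m : ℝ) + 2 ≤ (n : ℝ) := by exact_mod_cast (by omega : m + 2 ≤ n)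
    have hB : ((m : ℝ) + 1 - (k : ℝ)) *
          ((k : ℝ) * (2 * (n : ℝ) - (k : ℝ) - 1) - ((k : ℝ) - 1) * ((m : ℝ) - (k : ℝ)))
        ≤ (m : ℝ) *
          ((k : ℝ) * (2 * (n : ℝ) - (k : ℝ) - 1) - ((k : ℝ) - 1) * ((m : ℝ) + 1 - (k : ℝ))) := by
      nlinarith [mul_nonneg (mul_nonneg (by linarith : (0:ℝ) ≤ (k:ℝ) - 1)
        (by linarith : (0:ℝ) ≤ (k:ℝ))) (by linarith : (0:ℝ) ≤ 2 * (n : ℝ) - (m : ℝ) - 2)]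
    have hnc : (0 : ℝ) ≤ (n : ℝ) * ((m + 1).choose k : ℝ) := by positivity
    have t1 := mul_le_mul_of_nonneg_left hB hnc
    have t2 := mul_le_mul_of_nonneg_left ih' (by positivity : (0:ℝ) ≤ (m : ℝ))
    have e1 : ((m : ℝ) + 1) * ((n : ℝ) * (m.choose k : ℝ) *
          ((k : ℝ) * (2 * (n : ℝ) - (k : ℝ) - 1) - ((k : ℝ) - 1) * ((m : ℝ) - (k : ℝ))))
        = (n : ℝ) * ((m + 1).choose k : ℝ) * (((m : ℝ) + 1 - (k : ℝ)) *
          ((k : ℝ) * (2 * (n : ℝ) - (k : ℝ) - 1) - ((k : ℝ) - 1) * ((m : ℝ) - (k : ℝ)))) := by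
      linear_combination (n : ℝ) *
        ((k : ℝ) * (2 * (n : ℝ) - (k : ℝ) - 1) - ((k : ℝ) - 1) * ((m : ℝ) - (k : ℝ))) * hc'
    have hpos : (0 : ℝ) < (m : ℝ) + 1 := by positivity
    have hfin : ((m : ℝ) + 1) * ((n : ℝ) * (m.choose k : ℝ) *
          ((k : ℝ) * (2 * (n : ℝ) - (k : ℝ) - 1) - ((k : ℝ) - 1) * ((m : ℝ) - (k : ℝ))))
        ≤ ((m : ℝ) + 1) * ((m : ℝ) * (n.choose k : ℝ) *
          ((k : ℝ) * ((n : ℝ) - (k : ℝ) - 1) + (n : ℝ))) := by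
      nlinarith [t1, t2, e1]
    exact le_of_mul_le_mul_left hfin hpos

section Aux

variable {L : ℕ} {W : Fin L → Type*} [∀ i, Fintype (W i)] [∀ i, DecidableEq (W i)]

lemma muSet_finite (p : (∀ i, W i) → ℝ) (k : ℕ) :
    {x | ∃ S : Finset (Fin L), S.card = k ∧ multiInfo p S = x}.Finite := by
  have : {x | ∃ S : Finset (Fin L), S.card = k ∧ multiInfo p S = x}
      = (fun S => multiInfo p S) '' {S : Finset (Fin L) | S.card = k} := by
    ext x; simp [Set.mem_image, eq_comm]
  rw [this]
  exact (Set.toFinite _).image _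

lemma muSet_nonempty (p : (∀ i, W i) → ℝ) (k : ℕ) (hk : k ≤ L) :
    {x | ∃ S : Finset (Fin L), S.card = k ∧ multiInfo p S = x}.Nonempty := by
  obtain ⟨S, -, hS⟩ := Finset.exists_subset_card_eq
    (by simpa using hk : k ≤ (Finset.univ : Finset (Fin L)).card)
  exact ⟨multiInfo p S, S, hS, rfl⟩

lemma muMin_le_muMax (p : (∀ i, W i) → ℝ) (k : ℕ) (hk : k ≤ L) :
    muMin p k ≤ muMax p k :=
  csInf_le_csSup (hb := (muSet_finite p k).bddBelow) (ha := (muSet_finite p k).bddAbove)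
    (ne := muSet_nonempty p k hk)

lemma one_lt_gap {k : ℕ} (hk2 : 2 ≤ k) (hkL : k + 2 ≤ L) : (1 : ℝ) < gap L k := by
  have hk0 : (0 : ℝ) < (k : ℝ) := by positivity
  have hL1 : (0 : ℝ) < (L : ℝ) - 1 := by
    have : (2 : ℝ) ≤ (L : ℝ) := by exact_mod_cast (by omega : 2 ≤ L)
    linarith
  have hden : (0 : ℝ) < 2 * (L : ℝ) - (k : ℝ) - 3 := by
    have h1 : (k : ℝ) + 2 ≤ (L : ℝ) := by exact_mod_cast hkL
    linarith
  have : (0 : ℝ) < (1 / (k : ℝ)) * (((L : ℝ) - 1) / (2 * (L : ℝ) - (k : ℝ) - 3)) := by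
    positivity
  unfold gap; linarith

lemma muMin_nonneg (p : (∀ i, W i) → ℝ) (hbal : Balanced p) {k : ℕ}
    (hk2 : 2 ≤ k) (hkL : k + 2 ≤ L) : 0 ≤ muMin p k := by
  by_contra h
  push_neg at h
  have hbk := hbal k (by simp only [Finset.mem_Icc]; omega)
  have hgap := one_lt_gap (L := L) hk2 hkL
  have h1 : gap L k * muMin p k < 1 * muMin p k :=
    mul_lt_mul_of_neg_right hgap h
  have h2 : muMin p k ≤ muMax p k := muMin_le_muMax p k (by omega)
  linarith

end Aux

end MWRC


open MWRC Finset

/-- For a balanced source, `2 ≤ k ≤ L−2` and `T ⊂ [1,L]` with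
`k ≤ |T| ≤ L−2`: `μ̄_k ≤ (1 + β(k,T)/((k−1)·α(k,T)))·μ̲_k`, where
`α(k,T) = |T|·C(L−1,k) − (|T|−k)·C(|T|,k)` and `β(k,T) = |T|·C(L−1,k) − (L−1)·C(|T|,k)`. -/
theorem stmt13 {L : ℕ} (hL : 4 ≤ L) {W : Fin L → Type*} [∀ i, Fintype (W i)]
    [∀ i, DecidableEq (W i)] (p : (∀ i, W i) → ℝ) (hp : IsPMF p)
    (hbal : Balanced p) (k : ℕ) (hk2 : 2 ≤ k) (hkL : k + 2 ≤ L)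
    (T : Finset (Fin L)) (hT : T ⊂ Finset.univ) (hkT : k ≤ T.card)
    (hTL : T.card + 2 ≤ L) :
    muMax p k ≤
      (1 + ((T.card : ℝ) * ((L - 1).choose k : ℝ) - ((L : ℝ) - 1) * (T.card.choose k : ℝ)) /
          (((k : ℝ) - 1) *
            ((T.card : ℝ) * ((L - 1).choose k : ℝ) -
              ((T.card : ℝ) - (k : ℝ)) * (T.card.choose k : ℝ)))) *
        muMin p k := by
  set m := T.card with hm
  have hmL : m ≤ L - 2 := by omega
  have hkR : (2 : ℝ) ≤ (k : ℝ) := by exact_mod_cast hk2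
  have hmR : (k : ℝ) ≤ (m : ℝ) := by exact_mod_cast hkT
  have hLR : (m : ℝ) + 2 ≤ (L : ℝ) := by exact_mod_cast hTL
  have hLk : (k : ℝ) + 2 ≤ (L : ℝ) := by exact_mod_cast hkL
  set C1 : ℝ := ((L - 1).choose k : ℝ) with hC1
  set C2 : ℝ := (m.choose k : ℝ) with hC2
  have hC2pos : (0 : ℝ) < C2 := by
    rw [hC2]; exact_mod_cast Nat.choose_pos hkT
  have hC12 : C2 ≤ C1 := by
    rw [hC1, hC2]; exact_mod_cast Nat.choose_le_choose k (by omega : m ≤ L - 1)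
  set α : ℝ := (m : ℝ) * C1 - ((m : ℝ) - (k : ℝ)) * C2 with hα
  set β : ℝ := (m : ℝ) * C1 - ((L : ℝ) - 1) * C2 with hβ
  have hαpos : (0 : ℝ) < α := by
    have h1 : (m : ℝ) * C2 ≤ (m : ℝ) * C1 :=
      mul_le_mul_of_nonneg_left hC12 (by positivity)
    have : (k : ℝ) * C2 ≤ α := by rw [hα]; nlinarith
    nlinarith
  have hdenpos : (0 : ℝ) < ((k : ℝ) - 1) * α := by
    apply mul_pos (by linarith) hαpos
  have hDpos : (0 : ℝ) < (k : ℝ) * (2 * (L : ℝ) - (k : ℝ) - 3) := by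
    apply mul_pos (by linarith); linarith
  -- the key combinatorial inequality with n := L - 1
  have hkey := key_ineq k (L - 1) hk2 (L - 2 - m) m hkT (by omega)
  have hcastL : ((L - 1 : ℕ) : ℝ) = (L : ℝ) - 1 := by
    have : (1 : ℕ) ≤ L := by omega
    push_cast [Nat.cast_sub this]; ring
  rw [hcastL] at hkey
  -- hkey : (L-1) * C2 * (k(2(L-1)-k-1) - (k-1)(m-k)) ≤ m * C1 * (k((L-1)-k-1) + (L-1))
  have hfrac : ((L : ℝ) - 1) / ((k : ℝ) * (2 * (L : ℝ) - (k : ℝ) - 3))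
      ≤ β / (((k : ℝ) - 1) * α) := by
    rw [div_le_div_iff₀ hDpos hdenpos]
    have hid : β * ((k : ℝ) * (2 * (L : ℝ) - (k : ℝ) - 3))
        - ((L : ℝ) - 1) * (((k : ℝ) - 1) * α)
        = (m : ℝ) * C1 * ((k : ℝ) * (((L : ℝ) - 1) - (k : ℝ) - 1) + ((L : ℝ) - 1))
          - ((L : ℝ) - 1) * C2 *
            ((k : ℝ) * (2 * ((L : ℝ) - 1) - (k : ℝ) - 1) - ((k : ℝ) - 1) * ((m : ℝ) - (k : ℝ))) := by
      rw [hα, hβ]; ring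
    nlinarith [hkey]
  have hgap_le : gap L k ≤ 1 + β / (((k : ℝ) - 1) * α) := by
    unfold gap
    have : (1 / (k : ℝ)) * (((L : ℝ) - 1) / (2 * (L : ℝ) - (k : ℝ) - 3))
        = ((L : ℝ) - 1) / ((k : ℝ) * (2 * (L : ℝ) - (k : ℝ) - 3)) := by
      rw [div_mul_div_comm]; ring_nf
    rw [this]; linarith
  have hbk := hbal k (by simp only [Finset.mem_Icc]; omega)
  have hmin := muMin_nonneg p hbal hk2 hkL
  calc muMax p k ≤ gap L k * muMin p k := hbk
    _ ≤ (1 + β / (((k : ℝ) - 1) * α)) * muMin p k :=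
        mul_le_mul_of_nonneg_right hgap_le hmin
end

section
/- Let L, k, t be integers with 2 ≤ k ≤ L−2 and k ≤ t ≤ L−2. Define α(k,t) := t·C(L−1,k) − (t−k)·C(t,k) and β(k,t) := t·C(L−1,k) − (L−1)·C(t,k), where C(n,k) is the binomial coefficient. Then α(k,t) > 0, β(k,t) > 0, and β(k,t)/α(k,t) ≥ ((k−1)/k)·(L−1)/(2L−k−3). -/
/-- Key inequality by downward induction on `t` (via `s = L - 2 - t`). -/
lemma keyP (L k : ℕ) (hk : 2 ≤ k) (hkL : k + 2 ≤ L) :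
    ∀ s t : ℕ, k ≤ t → t + s = L - 2 →
      ((L : ℝ) - 1) * (2 * (k : ℝ) * ((L : ℝ) - 2) - ((k : ℝ) - 1) * (t : ℝ)) *
          (t.choose k : ℝ) ≤
        (t : ℝ) * ((k : ℝ) + 1) * ((L : ℝ) - (k : ℝ) - 1) * ((L - 1).choose k : ℝ) := by
  intro s
  induction s with
  | zero =>
    intro t ht heq
    have ht2 : t = L - 2 := by omega
    subst ht2
    -- choose identity: C(L-2,k)*(L-1) = C(L-1,k)*(L-1-k)
    have hker := Nat.choose_mul_succ_eq (L - 2) k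
    have h1 : L - 2 + 1 = L - 1 := by omega
    rw [h1] at hker
    have hcast : ((L - 2).choose k : ℝ) * ((L : ℝ) - 1) =
        ((L - 1).choose k : ℝ) * ((L : ℝ) - 1 - (k : ℝ)) := by
      have := congrArg (fun n : ℕ => (n : ℝ)) hker
      push_cast at this
      have hL1 : ((L - 1 : ℕ) : ℝ) = (L : ℝ) - 1 := by
        have : (1:ℕ) ≤ L := by omega
        push_cast [this]; ring
      have hL1k : ((L - 1 - k : ℕ) : ℝ) = (L : ℝ) - 1 - (k : ℝ) := by
        have : k + 1 ≤ L := by omega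
        push_cast [Nat.cast_sub (by omega : k ≤ L - 1), Nat.cast_sub (by omega : 1 ≤ L)]
        ring
      rw [hL1, hL1k] at this
      linarith [this]
    have hL2 : ((L - 2 : ℕ) : ℝ) = (L : ℝ) - 2 := by
      push_cast [Nat.cast_sub (by omega : 2 ≤ L)]; ring
    rw [hL2]
    have : ((L : ℝ) - 1) * (2 * (k : ℝ) * ((L : ℝ) - 2) - ((k : ℝ) - 1) * ((L:ℝ) - 2)) *
        ((L - 2).choose k : ℝ) =
        ((L : ℝ) - 2) * ((k : ℝ) + 1) * ((L : ℝ) - (k : ℝ) - 1) * ((L - 1).choose k : ℝ) := by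
      linear_combination ((L : ℝ) - 2) * ((k : ℝ) + 1) * hcast
    exact le_of_eq this
  | succ s ih =>
    intro t ht heq
    have ih' := ih (t + 1) (by omega) (by omega)
    -- C(t,k)*(t+1) = C(t+1,k)*(t+1-k)
    have hker := Nat.choose_mul_succ_eq t k
    have hcast : (t.choose k : ℝ) * ((t : ℝ) + 1) =
        ((t + 1).choose k : ℝ) * ((t : ℝ) + 1 - (k : ℝ)) := by
      have := congrArg (fun n : ℕ => (n : ℝ)) hker
      push_cast [Nat.cast_sub (by omega : k ≤ t + 1)] at this
      linarith [this]
    have htle : (t : ℝ) ≤ (L : ℝ) - 2 - 1 := by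
      have h := (show ((t:ℝ) + 3 ≤ (L:ℝ)) by exact_mod_cast (show t + 3 ≤ L by omega))
      linarith
    have hkr : (2 : ℝ) ≤ (k : ℝ) := by exact_mod_cast hk
    have hscal : (2 * (k : ℝ) * ((L : ℝ) - 2) - ((k : ℝ) - 1) * (t : ℝ)) *
        ((t : ℝ) + 1 - (k : ℝ)) ≤
        (t : ℝ) * (2 * (k : ℝ) * ((L : ℝ) - 2) - ((k : ℝ) - 1) * ((t : ℝ) + 1)) := by
      nlinarith [mul_nonneg (mul_nonneg (by linarith : (0:ℝ) ≤ (k:ℝ))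
        (by linarith : (0:ℝ) ≤ (k:ℝ) - 1)) (by linarith : (0:ℝ) ≤ 2 * ((L:ℝ) - 2) - (t:ℝ))]
    have hC1 : (0 : ℝ) ≤ ((t + 1).choose k : ℝ) := by positivity
    have hL1 : (0 : ℝ) ≤ (L : ℝ) - 1 := by
      have h := (show ((4:ℝ) ≤ (L:ℝ)) by exact_mod_cast (show 4 ≤ L by omega))
      linarith
    have ht0 : (0 : ℝ) ≤ (t : ℝ) := by positivity
    have htp : (0 : ℝ) < (t : ℝ) + 1 := by positivity
    rw [← mul_le_mul_iff_of_pos_right htp]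
    calc ((L : ℝ) - 1) * (2 * (k : ℝ) * ((L : ℝ) - 2) - ((k : ℝ) - 1) * (t : ℝ)) *
          (t.choose k : ℝ) * ((t : ℝ) + 1)
        = ((L : ℝ) - 1) * ((t + 1).choose k : ℝ) *
          ((2 * (k : ℝ) * ((L : ℝ) - 2) - ((k : ℝ) - 1) * (t : ℝ)) *
            ((t : ℝ) + 1 - (k : ℝ))) := by
          rw [mul_assoc, hcast]; ring
      _ ≤ ((L : ℝ) - 1) * ((t + 1).choose k : ℝ) *
          ((t : ℝ) * (2 * (k : ℝ) * ((L : ℝ) - 2) - ((k : ℝ) - 1) * ((t : ℝ) + 1))) :=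
          mul_le_mul_of_nonneg_left hscal (by positivity)
      _ = (t : ℝ) * (((L : ℝ) - 1) *
            (2 * (k : ℝ) * ((L : ℝ) - 2) - ((k : ℝ) - 1) * ((t : ℝ) + 1)) *
            ((t + 1).choose k : ℝ)) := by ring
      _ ≤ (t : ℝ) * (((t : ℝ) + 1) * ((k : ℝ) + 1) * ((L : ℝ) - (k : ℝ) - 1) *
            ((L - 1).choose k : ℝ)) := by
          apply mul_le_mul_of_nonneg_left _ ht0
          calc ((L : ℝ) - 1) *
              (2 * (k : ℝ) * ((L : ℝ) - 2) - ((k : ℝ) - 1) * ((t : ℝ) + 1)) *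
              ((t + 1).choose k : ℝ)
              = ((L : ℝ) - 1) *
                (2 * (k : ℝ) * ((L : ℝ) - 2) - ((k : ℝ) - 1) * ((t + 1 : ℕ) : ℝ)) *
                (((t + 1 : ℕ)).choose k : ℝ) := by push_cast; ring
            _ ≤ ((t + 1 : ℕ) : ℝ) * ((k : ℝ) + 1) * ((L : ℝ) - (k : ℝ) - 1) *
                ((L - 1).choose k : ℝ) := ih'
            _ = ((t : ℝ) + 1) * ((k : ℝ) + 1) * ((L : ℝ) - (k : ℝ) - 1) *
                ((L - 1).choose k : ℝ) := by push_cast; ring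
      _ = (t : ℝ) * ((k : ℝ) + 1) * ((L : ℝ) - (k : ℝ) - 1) * ((L - 1).choose k : ℝ) *
            ((t : ℝ) + 1) := by ring

/-- For integers `2 ≤ k ≤ L−2` and `k ≤ t ≤ L−2`, with
`α(k,t) = t·C(L−1,k) − (t−k)·C(t,k)` and `β(k,t) = t·C(L−1,k) − (L−1)·C(t,k)`:
`α > 0`, `β > 0`, and `β/α ≥ ((k−1)/k)·(L−1)/(2L−k−3)`. -/
theorem stmt14 (L k t : ℕ) (hk : 2 ≤ k) (hkL : k + 2 ≤ L) (hkt : k ≤ t)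
    (htL : t + 2 ≤ L) :
    0 < (t : ℝ) * ((L - 1).choose k : ℝ) - ((t : ℝ) - (k : ℝ)) * (t.choose k : ℝ) ∧
      0 < (t : ℝ) * ((L - 1).choose k : ℝ) - ((L : ℝ) - 1) * (t.choose k : ℝ) ∧
      ((k : ℝ) - 1) / (k : ℝ) * (((L : ℝ) - 1) / (2 * (L : ℝ) - (k : ℝ) - 3)) ≤
        ((t : ℝ) * ((L - 1).choose k : ℝ) - ((L : ℝ) - 1) * (t.choose k : ℝ)) /
          ((t : ℝ) * ((L - 1).choose k : ℝ) - ((t : ℝ) - (k : ℝ)) * (t.choose k : ℝ)) := by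
  have hP := keyP L k hk hkL (L - 2 - t) t hkt (by omega)
  have hkr : (2 : ℝ) ≤ (k : ℝ) := by exact_mod_cast hk
  have hkLr : (k : ℝ) + 2 ≤ (L : ℝ) := by exact_mod_cast hkL
  have hktr : (k : ℝ) ≤ (t : ℝ) := by exact_mod_cast hkt
  have htLr : (t : ℝ) + 2 ≤ (L : ℝ) := by exact_mod_cast htL
  have hCle : (t.choose k : ℝ) ≤ ((L - 1).choose k : ℝ) := by
    exact_mod_cast Nat.choose_le_choose k (show t ≤ L - 1 by omega)
  have hCt1 : (1 : ℝ) ≤ (t.choose k : ℝ) := by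
    exact_mod_cast Nat.succ_le_of_lt (Nat.choose_pos hkt)
  -- α > 0
  have hα : 0 < (t : ℝ) * ((L - 1).choose k : ℝ) - ((t : ℝ) - (k : ℝ)) * (t.choose k : ℝ) := by
    nlinarith [hCle, hCt1, hkr, hktr]
  have hA : (0 : ℝ) < ((k : ℝ) + 1) * ((L : ℝ) - (k : ℝ) - 1) := by nlinarith
  -- β > 0
  have hstep : ((L : ℝ) - 1) * (((k : ℝ) + 1) * ((L : ℝ) - (k : ℝ) - 1) +
      ((k : ℝ) + 1) * ((k : ℝ) - 1)) * (t.choose k : ℝ) ≤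
      ((L : ℝ) - 1) * (2 * (k : ℝ) * ((L : ℝ) - 2) - ((k : ℝ) - 1) * (t : ℝ)) *
        (t.choose k : ℝ) := by
    have hsc : ((k : ℝ) + 1) * ((L : ℝ) - (k : ℝ) - 1) + ((k : ℝ) + 1) * ((k : ℝ) - 1) ≤
        2 * (k : ℝ) * ((L : ℝ) - 2) - ((k : ℝ) - 1) * (t : ℝ) := by
      nlinarith [mul_nonneg (by linarith : (0:ℝ) ≤ (k:ℝ) - 1)
        (by linarith : (0:ℝ) ≤ (L:ℝ) - 2 - (t:ℝ))]
    have hnn : (0 : ℝ) ≤ ((L : ℝ) - 1) * (t.choose k : ℝ) := by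
      apply mul_nonneg (by linarith) (by linarith)
    nlinarith [mul_le_mul_of_nonneg_left hsc hnn]
  have key2 : ((L : ℝ) - 1) * ((k : ℝ) + 1) * ((k : ℝ) - 1) * (t.choose k : ℝ) ≤
      (((k : ℝ) + 1) * ((L : ℝ) - (k : ℝ) - 1)) *
        ((t : ℝ) * ((L - 1).choose k : ℝ) - ((L : ℝ) - 1) * (t.choose k : ℝ)) := by
    nlinarith [hP, hstep]
  have hpos2 : (0 : ℝ) < ((L : ℝ) - 1) * ((k : ℝ) + 1) * ((k : ℝ) - 1) * (t.choose k : ℝ) := by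
    apply mul_pos (mul_pos (mul_pos (by linarith) (by linarith)) (by linarith)) (by linarith)
  have hβ : 0 < (t : ℝ) * ((L - 1).choose k : ℝ) - ((L : ℝ) - 1) * (t.choose k : ℝ) := by
    nlinarith [key2, hpos2, hA]
  refine ⟨hα, hβ, ?_⟩
  rw [le_div_iff₀ hα]
  have hkpos : (0 : ℝ) < (k : ℝ) := by linarith
  have hDpos : (0 : ℝ) < 2 * (L : ℝ) - (k : ℝ) - 3 := by linarith
  rw [div_mul_div_comm, div_mul_eq_mul_div, div_le_iff₀ (mul_pos hkpos hDpos)]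
  have hid : ((t : ℝ) * ((L - 1).choose k : ℝ) - ((L : ℝ) - 1) * (t.choose k : ℝ)) *
      ((k : ℝ) * (2 * (L : ℝ) - (k : ℝ) - 3)) -
      ((k : ℝ) - 1) * ((L : ℝ) - 1) *
        ((t : ℝ) * ((L - 1).choose k : ℝ) - ((t : ℝ) - (k : ℝ)) * (t.choose k : ℝ)) =
      (t : ℝ) * ((k : ℝ) + 1) * ((L : ℝ) - (k : ℝ) - 1) * ((L - 1).choose k : ℝ) -
      ((L : ℝ) - 1) * (2 * (k : ℝ) * ((L : ℝ) - 2) - ((k : ℝ) - 1) * (t : ℝ)) *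
        (t.choose k : ℝ) := by ring
  linarith [hP, hid]
end

section
/- If p ∈ 𝒫* (equivalently, r*(p) ∈ R(p)), then the minimum of r_1 + ⋯ + r_L over all r ∈ R(p) equals ‖h(p)‖/(L−1) and is attained at r*(p); moreover every r′ ∈ R(p) satisfies r′_1 + ⋯ + r′_L ≥ r*_1 + ⋯ + r*_L = ‖h(p)‖/(L−1). -/
open Finset Real

open MWRC Finset

/-- If `p ∈ 𝒫*` then the minimum of `r_1 + ⋯ + r_L` over `R(p)`
equals `‖h(p)‖/(L−1)` and is attained at `r*(p)`. -/
theorem stmt17 {L : ℕ} (hL : 2 ≤ L) {W : Fin L → Type*} [∀ i, Fintype (W i)]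
    [∀ i, DecidableEq (W i)] (p : (∀ i, W i) → ℝ) (hp : IsPMF p)
    (hPs : Pstar p) :
    rstar p ∈ Rset p ∧
      (∑ ℓ : Fin L, rstar p ℓ) = hNorm p / ((L : ℝ) - 1) ∧
      ∀ r' ∈ Rset p, hNorm p / ((L : ℝ) - 1) ≤ ∑ ℓ : Fin L, r' ℓ := by
  classical
  obtain ⟨r, hrR, hr⟩ := hPs
  have hL1 : (0:ℝ) < (L:ℝ) - 1 := by
    have : (2:ℝ) ≤ (L:ℝ) := by exact_mod_cast hL
    linarith
  have hcompl : ∀ (f : Fin L → ℝ) (ℓ : Fin L),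
      ∑ i ∈ ({ℓ}ᶜ : Finset (Fin L)), f i = (∑ i, f i) - f ℓ := by
    intro f ℓ
    have := Finset.sum_compl_add_sum ({ℓ} : Finset (Fin L)) f
    simp at this
    linarith
  -- sum of r
  have hsum : ∑ ℓ : Fin L, r ℓ = hNorm p / ((L:ℝ) - 1) := by
    have h1 : ∑ ℓ : Fin L, (∑ i ∈ ({ℓ}ᶜ : Finset (Fin L)), r i) = hNorm p := by
      unfold hNorm; exact Finset.sum_congr rfl fun ℓ _ => hr ℓ
    have h2 : ∑ ℓ : Fin L, ((∑ i, r i) - r ℓ) = hNorm p := by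
      rw [← h1]; exact Finset.sum_congr rfl fun ℓ _ => (hcompl r ℓ).symm
    have h3 : (L:ℝ) * (∑ i, r i) - (∑ i, r i) = hNorm p := by
      rw [← h2, Finset.sum_sub_distrib, Finset.sum_const, Finset.card_univ,
        Fintype.card_fin, nsmul_eq_mul]
    field_simp
    linarith
  have hreq : r = rstar p := by
    funext ℓ
    have := hcompl r ℓ
    rw [hr ℓ, hsum] at this
    unfold rstar
    linarith
  refine ⟨hreq ▸ hrR, ?_, ?_⟩
  · rw [← hreq, hsum]
  · intro r' hr'
    obtain ⟨hpos, hineq⟩ := hr'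
    have hkey : ∀ ℓ : Fin L, condEnt p {ℓ}ᶜ {ℓ} ≤ (∑ i, r' i) - r' ℓ := by
      intro ℓ
      have hss : ({ℓ}ᶜ : Finset (Fin L)) ⊂ Finset.univ := by
        refine Finset.ssubset_univ_iff.mpr ?_
        intro h
        have : ℓ ∈ ({ℓ}ᶜ : Finset (Fin L)) := h ▸ Finset.mem_univ ℓ
        simp at this
      have := hineq ({ℓ}ᶜ) hss
      rw [compl_compl] at this
      rw [← hcompl r' ℓ]
      exact this
    have hsum2 : hNorm p ≤ (L:ℝ) * (∑ i, r' i) - (∑ i, r' i) := by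
      have := Finset.sum_le_sum (fun ℓ (_ : ℓ ∈ Finset.univ) => hkey ℓ)
      rw [Finset.sum_sub_distrib, Finset.sum_const, Finset.card_univ,
        Fintype.card_fin, nsmul_eq_mul] at this
      exact this
    rw [div_le_iff₀ hL1]
    linarith
end
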